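/- arXiv:1312.3316 — 2 statements merged into one kernel-verified Lean document; each statement's English description precedes it below -/
import Mathlib

section
/- Assume k_{-w₀(α)}=k_α for all α∈Π. For every finite-dimensional H-module X and every finite-dimensional H_M-module (σ′,U′), there is a ℂ-linear isomorphism Hom_{H_M}(X|_{H_M}, U′) ≅ Hom_H(X, X(δ(M), aσ′)) between the spaces of module homomorphisms (second form of Frobenius reciprocity). -/
/- Formalization of the setting of Barbasch–Ciubotaru, "Hermitian forms for
affine Hecke algebras": a reduced root system, Weyl group, parameters,
complexifications, and the graded affine Hecke algebra. -/

noncomputable section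

structure GHA where
  (V Vd VC VdC W H : Type)
  [addV : AddCommGroup V] [modV : Module ℝ V] [fdV : FiniteDimensional ℝ V]
  [addVd : AddCommGroup Vd] [modVd : Module ℝ Vd] [fdVd : FiniteDimensional ℝ Vd]
  [deqV : DecidableEq V] [deqW : DecidableEq W]
  [addVC : AddCommGroup VC] [modVC : Module ℂ VC]
  [addVdC : AddCommGroup VdC] [modVdC : Module ℂ VdC]
  [grpW : Group W] [finW : Fintype W]
  [ringH : Ring H] [algH : Algebra ℂ H]
  -- the perfect bilinear pairing between V and V∨
  pairR : V →ₗ[ℝ] Vd →ₗ[ℝ] ℝ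
  pair_nondeg_left : ∀ v : V, (∀ u : Vd, pairR v u = 0) → v = 0
  pair_nondeg_right : ∀ u : Vd, (∀ v : V, pairR v u = 0) → u = 0
  -- roots, coroots, and the bijection α ↦ α∨
  roots : Finset V
  corootsF : Finset Vd
  cv : V → Vd
  roots_ne_zero : ∀ α ∈ roots, α ≠ 0
  coroots_ne_zero : ∀ β ∈ corootsF, β ≠ 0
  cv_mem : ∀ α ∈ roots, cv α ∈ corootsF
  cv_injOn : Set.InjOn cv roots
  cv_surjOn : ∀ β ∈ corootsF, ∃ α ∈ roots, cv α = β
  pair_cv_self : ∀ α ∈ roots, pairR α (cv α) = 2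
  reflV_mem : ∀ α ∈ roots, ∀ β ∈ roots, β - pairR β (cv α) • α ∈ roots
  reflVd_mem : ∀ α ∈ roots, ∀ β ∈ corootsF, β - pairR α β • cv α ∈ corootsF
  reduced : ∀ α ∈ roots, (2 : ℝ) • α ∉ roots
  -- simple roots and positive roots
  simples : Finset V
  posRoots : Finset V
  simples_subset : simples ⊆ posRoots
  posRoots_subset : posRoots ⊆ roots
  roots_pos_or_neg : ∀ α ∈ roots, α ∈ posRoots ∨ -α ∈ posRoots
  posRoots_not_neg : ∀ α ∈ posRoots, -α ∉ posRoots
  simples_linearIndependent : LinearIndependent ℝ (fun β : {x // x ∈ simples} => (β : V))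
  posRoots_nonneg_comb : ∀ α ∈ posRoots, ∃ c : V → ℝ,
    (∀ β ∈ simples, 0 ≤ c β) ∧ α = ∑ β ∈ simples, c β • β
  -- the Weyl group, acting on V and V∨, generated by the reflections s_α
  s : V → W
  actV : W →* V ≃ₗ[ℝ] V
  actVd : W →* Vd ≃ₗ[ℝ] Vd
  actV_s : ∀ α ∈ roots, ∀ v : V, actV (s α) v = v - pairR v (cv α) • α
  actVd_s : ∀ α ∈ roots, ∀ u : Vd, actVd (s α) u = u - pairR α u • cv α
  act_pair : ∀ (w : W) (v : V) (u : Vd), pairR (actV w v) (actVd w u) = pairR v u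
  actV_faithful : ∀ w : W, (∀ v : V, actV w v = v) → w = 1
  gen_by_refl : Subgroup.closure (s '' roots) = (⊤ : Subgroup W)
  actV_roots : ∀ (w : W), ∀ α ∈ roots, actV w α ∈ roots
  -- the longest element
  w0 : W
  w0_neg : ∀ α ∈ posRoots, -(actV w0 α) ∈ posRoots
  w0_unique : ∀ w : W, (∀ α ∈ posRoots, -(actV w α) ∈ posRoots) → w = w0
  -- the parameter function k (extended W-invariantly to all roots)
  kpar : V → ℝ
  kpar_invariant : ∀ (w : W), ∀ α ∈ roots, kpar (actV w α) = kpar α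
  -- complexifications of V and V∨, with real and imaginary parts
  iV : V →+ VC
  iVd : Vd →+ VdC
  iV_smul : ∀ (r : ℝ) (v : V), iV (r • v) = (r : ℂ) • iV v
  iVd_smul : ∀ (r : ℝ) (u : Vd), iVd (r • u) = (r : ℂ) • iVd u
  reV : VC →+ V
  imV : VC →+ V
  reVd : VdC →+ Vd
  imVd : VdC →+ Vd
  reV_iV : ∀ v : V, reV (iV v) = v
  imV_iV : ∀ v : V, imV (iV v) = 0
  reVd_iVd : ∀ u : Vd, reVd (iVd u) = u
  imVd_iVd : ∀ u : Vd, imVd (iVd u) = 0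
  vc_decomp : ∀ x : VC, x = iV (reV x) + Complex.I • iV (imV x)
  vdc_decomp : ∀ y : VdC, y = iVd (reVd y) + Complex.I • iVd (imVd y)
  reV_real_smul : ∀ (r : ℝ) (x : VC), reV ((r : ℂ) • x) = r • reV x
  imV_real_smul : ∀ (r : ℝ) (x : VC), imV ((r : ℂ) • x) = r • imV x
  reVd_real_smul : ∀ (r : ℝ) (y : VdC), reVd ((r : ℂ) • y) = r • reVd y
  imVd_real_smul : ∀ (r : ℝ) (y : VdC), imVd ((r : ℂ) • y) = r • imVd y
  -- the complex bilinear extension of the pairing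
  pairC : VC → VdC → ℂ
  pairC_add_left : ∀ x x' y, pairC (x + x') y = pairC x y + pairC x' y
  pairC_add_right : ∀ x y y', pairC x (y + y') = pairC x y + pairC x y'
  pairC_smul_left : ∀ (c : ℂ) x y, pairC (c • x) y = c * pairC x y
  pairC_smul_right : ∀ (c : ℂ) x y, pairC x (c • y) = c * pairC x y
  pairC_compat : ∀ (v : V) (u : Vd), pairC (iV v) (iVd u) = (pairR v u : ℂ)
  -- the complexified Weyl group actions
  actVC : W →* VC ≃ₗ[ℂ] VC
  actVdC : W →* VdC ≃ₗ[ℂ] VdC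
  actVC_iV : ∀ (w : W) (v : V), actVC w (iV v) = iV (actV w v)
  actVdC_iVd : ∀ (w : W) (u : Vd), actVdC w (iVd u) = iVd (actVd w u)
  -- the graded affine Hecke algebra H: elements t_w and the subalgebra S(V_ℂ)
  t : W → H
  t_one : t 1 = 1
  t_mul : ∀ w w', t w * t w' = t (w * w')
  θ : VC → H
  θ_add : ∀ x y, θ (x + y) = θ x + θ y
  θ_smul : ∀ (c : ℂ) (x : VC), θ (c • x) = c • θ x
  θ_comm : ∀ x y, θ x * θ y = θ y * θ x
  -- the graded Hecke algebra cross relation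
  cross_rel : ∀ α ∈ simples, ∀ ω : VC,
    θ ω * t (s α) = t (s α) * θ (actVC (s α) ω)
      + algebraMap ℂ H ((kpar α : ℂ) * pairC ω (iVd (cv α)))
  -- H ≅ ℂ[W] ⊗ S(V_ℂ) as a (ℂ[W], S(V_ℂ))-bimodule
  pbw_span : ∀ h : H, ∃ c : W → Algebra.adjoin ℂ (Set.range θ),
    h = ∑ w : W, t w * (c w : H)
  pbw_indep : ∀ c : W → Algebra.adjoin ℂ (Set.range θ),
    ∑ w : W, t w * (c w : H) = 0 → ∀ w, c w = 0
  -- the subalgebra generated by θ(V_ℂ) is the symmetric algebra S(V_ℂ)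
  poly_univ : ∀ (B : Type) [CommRing B] [Algebra ℂ B] (f : VC → B),
    (∀ x y, f (x + y) = f x + f y) → (∀ (c : ℂ) x, f (c • x) = c • f x) →
    ∃! g : Algebra.adjoin ℂ (Set.range θ) →ₐ[ℂ] B,
      ∀ x : VC, g ⟨θ x, Algebra.subset_adjoin ⟨x, rfl⟩⟩ = f x

attribute [instance] GHA.addV GHA.modV GHA.fdV GHA.addVd GHA.modVd GHA.fdVd
  GHA.deqV GHA.deqW GHA.addVC GHA.modVC GHA.addVdC GHA.modVdC GHA.grpW GHA.finW
  GHA.ringH GHA.algH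

namespace GHA

/-- Complex conjugation on V_ℂ. -/
def conjVC (D : GHA) (x : D.VC) : D.VC := D.iV (D.reV x) - Complex.I • D.iV (D.imV x)

/-- Complex conjugation on V∨_ℂ. -/
def conjVdC (D : GHA) (y : D.VdC) : D.VdC := D.iVd (D.reVd y) - Complex.I • D.iVd (D.imVd y)

/-- The bullet operation: conjugate-linear anti-automorphism with t_w ↦ t_{w⁻¹},
ω ↦ conj ω. -/
structure IsBullet (D : GHA) (f : D.H → D.H) : Prop where
  map_add : ∀ x y, f (x + y) = f x + f y
  map_smul : ∀ (c : ℂ) (x : D.H), f (c • x) = (starRingEnd ℂ) c • f x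
  map_mul : ∀ x y, f (x * y) = f y * f x
  map_one : f 1 = 1
  map_t : ∀ w : D.W, f (D.t w) = D.t w⁻¹
  map_theta : ∀ x : D.VC, f (D.θ x) = D.θ (D.conjVC x)

/-- The star operation: conjugate-linear anti-automorphism with t_w ↦ t_{w⁻¹},
ω ↦ −t_{w₀}·conj(w₀(ω))·t_{w₀}. -/
structure IsStar (D : GHA) (f : D.H → D.H) : Prop where
  map_add : ∀ x y, f (x + y) = f x + f y
  map_smul : ∀ (c : ℂ) (x : D.H), f (c • x) = (starRingEnd ℂ) c • f x
  map_mul : ∀ x y, f (x * y) = f y * f x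
  map_one : f 1 = 1
  map_t : ∀ w : D.W, f (D.t w) = D.t w⁻¹
  map_theta : ∀ x : D.VC,
    f (D.θ x) = -(D.t D.w0 * D.θ (D.conjVC (D.actVC D.w0 x)) * D.t D.w0)

/-- The automorphism δ: t_w ↦ t_{w₀ww₀}, ω ↦ −w₀(ω). -/
structure IsDelta (D : GHA) (f : D.H → D.H) : Prop where
  map_add : ∀ x y, f (x + y) = f x + f y
  map_smul : ∀ (c : ℂ) (x : D.H), f (c • x) = c • f x
  map_mul : ∀ x y, f (x * y) = f x * f y
  map_one : f 1 = 1
  map_t : ∀ w : D.W, f (D.t w) = D.t (D.w0 * w * D.w0)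
  map_theta : ∀ x : D.VC, f (D.θ x) = -(D.θ (D.actVC D.w0 x))

/-- The standing assumption k_{−w₀(α)} = k_α for α ∈ Π. -/
def KSymm (D : GHA) : Prop := ∀ α ∈ D.simples, D.kpar (-(D.actV D.w0 α)) = D.kpar α

section Forms

variable {X : Type} [AddCommGroup X] [Module ℂ X]

/-- Sesquilinear form (conjugate-linear in the first variable). -/
def SesqForm (B : X → X → ℂ) : Prop :=
  (∀ x x' y, B (x + x') y = B x y + B x' y) ∧
  (∀ x y y', B x (y + y') = B x y + B x y') ∧
  (∀ (c : ℂ) (x y : X), B (c • x) y = (starRingEnd ℂ) c * B x y) ∧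
  (∀ (c : ℂ) (x y : X), B x (c • y) = c * B x y)

/-- Hermitian form. -/
def HermForm (B : X → X → ℂ) : Prop := ∀ x y, B x y = (starRingEnd ℂ) (B y x)

/-- κ-invariance of a form: ⟨π(h)x, y⟩ = ⟨x, π(κ(h))y⟩. -/
def InvForm (D : GHA) (π : D.H →ₐ[ℂ] Module.End ℂ X) (κ : D.H → D.H)
    (B : X → X → ℂ) : Prop :=
  ∀ (h : D.H) (x y : X), B (π h x) y = B x (π (κ h) y)

end Forms

/-- Irreducibility of a representation of a ℂ-algebra A on X. -/
def IsIrrRep (A : Type) [Ring A] [Algebra ℂ A] {X : Type} [AddCommGroup X]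
    [Module ℂ X] (π : A →ₐ[ℂ] Module.End ℂ X) : Prop :=
  Nontrivial X ∧ ∀ U : Submodule ℂ X, (∀ (a : A), ∀ x ∈ U, π a x ∈ U) → U = ⊥ ∨ U = ⊤

/-- Generalized weight space for a commuting family of operators indexed by V_ℂ. -/
def wtAux (D : GHA) {X : Type} [AddCommGroup X] [Module ℂ X]
    (T : D.VC → Module.End ℂ X) (lam : D.VdC) : Submodule ℂ X where
  carrier := {x | ∀ ω : D.VC, ∃ n : ℕ,
    ((T ω - D.pairC ω lam • (1 : Module.End ℂ X)) ^ n) x = 0}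
  zero_mem' := fun ω => ⟨1, by simp⟩
  add_mem' := by
    intro a b ha hb
    intro ω
    obtain ⟨n, hn⟩ := ha ω
    obtain ⟨m, hm⟩ := hb ω
    refine ⟨n + m, ?_⟩
    have hA : ((T ω - D.pairC ω lam • (1 : Module.End ℂ X)) ^ (n + m)) a = 0 := by
      rw [add_comm, pow_add, Module.End.mul_apply, hn, map_zero]
    have hB : ((T ω - D.pairC ω lam • (1 : Module.End ℂ X)) ^ (n + m)) b = 0 := by
      rw [pow_add, Module.End.mul_apply, hm, map_zero]
    rw [map_add, hA, hB, add_zero]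
  smul_mem' := by
    intro c a ha ω
    obtain ⟨n, hn⟩ := ha ω
    exact ⟨n, by rw [map_smul, hn, smul_zero]⟩

/-- Generalized A-weight space X_λ of an H-module. -/
def wtH (D : GHA) {X : Type} [AddCommGroup X] [Module ℂ X]
    (π : D.H →ₐ[ℂ] Module.End ℂ X) (lam : D.VdC) : Submodule ℂ X :=
  D.wtAux (fun ω => π (D.θ ω)) lam

/-- The set Ω(X) of A-weights of an H-module. -/
def OmegaH (D : GHA) {X : Type} [AddCommGroup X] [Module ℂ X]
    (π : D.H →ₐ[ℂ] Module.End ℂ X) : Set D.VdC :=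
  {lam | D.wtH π lam ≠ ⊥}

/-- Casselman's criterion for temperedness. -/
def IsTempered (D : GHA) {X : Type} [AddCommGroup X] [Module ℂ X]
    (π : D.H →ₐ[ℂ] Module.End ℂ X) : Prop :=
  ∀ lam ∈ D.OmegaH π, ∀ ω : D.V,
    (∀ α ∈ D.simples, 0 < D.pairR ω (D.cv α)) → D.pairR ω (D.reVd lam) ≤ 0

section Parabolic

variable (D : GHA) (PiM : Finset D.V)

/-- The parabolic subgroup W_M. -/
def WM : Subgroup D.W := Subgroup.closure (D.s '' (PiM : Set D.V))

/-- The positive roots R⁺_M lying in the span of Π_M. -/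
def RplusM : Set D.V :=
  {α | α ∈ D.posRoots ∧ α ∈ Submodule.span ℝ (PiM : Set D.V)}

/-- x is the minimal length representative of x·W_M, i.e. x(R⁺_M) ⊆ R⁺. -/
def IsMinRep (x : D.W) : Prop := ∀ α ∈ D.RplusM PiM, D.actV x α ∈ D.posRoots

/-- The set J_M of minimal length coset representatives. -/
abbrev JM : Type := {x : D.W // D.IsMinRep PiM x}

/-- The parabolic subalgebra H_M. -/
def HM : Subalgebra ℂ D.H :=
  Algebra.adjoin ℂ (Set.range D.θ ∪ (D.t '' ((D.WM PiM : Subgroup D.W) : Set D.W)))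

/-- t_w as an element of H_M, for w ∈ W_M. -/
def tM (w : D.W) (hw : w ∈ D.WM PiM) : D.HM PiM :=
  ⟨D.t w, Algebra.subset_adjoin (Or.inr ⟨w, hw, rfl⟩)⟩

/-- θ(ω) as an element of H_M. -/
def θM (x : D.VC) : D.HM PiM :=
  ⟨D.θ x, Algebra.subset_adjoin (Or.inl ⟨x, rfl⟩)⟩

/-- Π_{δ(M)} = −w₀(Π_M). -/
def deltaSimples : Finset D.V := PiM.image (fun α => -(D.actV D.w0 α))

/-- w is the longest element of W_M. -/
def IsLongest (w : D.W) : Prop :=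
  w ∈ D.WM PiM ∧ ∀ α ∈ D.RplusM PiM, -(D.actV w α) ∈ D.RplusM PiM

end Parabolic

/-- The unique factorization z = c_M(z)·m_M(z) with c_M(z) minimal in z·W_M and
m_M(z) ∈ W_M. -/
structure CosetData (D : GHA) (PiM : Finset D.V) where
  c : D.W → D.W
  m : D.W → D.W
  c_min : ∀ z, D.IsMinRep PiM (c z)
  m_mem : ∀ z, m z ∈ D.WM PiM
  factor : ∀ z, z = c z * m z
  uniq : ∀ (z c' m' : D.W), D.IsMinRep PiM c' → m' ∈ D.WM PiM → z = c' * m' →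
    c' = c z ∧ m' = m z

/-- The defining formulas for the H-action on the parabolically induced module
X(M,σ) = H ⊗_{H_M} U, realized on ⊕_{x ∈ J_M} U. -/
def IsInducedAction (D : GHA) (PiM : Finset D.V) (cd : CosetData D PiM)
    {U : Type} [AddCommGroup U] [Module ℂ U]
    (σ : D.HM PiM →ₐ[ℂ] Module.End ℂ U)
    (πI : D.H →ₐ[ℂ] Module.End ℂ (D.JM PiM → U)) : Prop :=
  (∀ (z : D.W) (x : D.JM PiM) (v : U),
      πI (D.t z) (Pi.single x v) =
        Pi.single (⟨cd.c (z * x.1), cd.c_min _⟩ : D.JM PiM)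
          (σ (D.tM PiM (cd.m (z * x.1)) (cd.m_mem _)) v)) ∧
  (∀ (ω : D.VC) (x : D.JM PiM) (v : U),
      πI (D.θ ω) (Pi.single x v) =
        Pi.single x (σ (D.θM PiM (D.actVC x.1⁻¹ ω)) v) +
          ∑ β ∈ D.posRoots.filter (fun β => -(D.actV x.1⁻¹ β) ∈ D.posRoots),
            ((D.kpar β : ℂ) * D.pairC ω (D.iVd (D.cv β))) •
              (Pi.single (⟨cd.c (D.s β * x.1), cd.c_min _⟩ : D.JM PiM)
                (σ (D.tM PiM (cd.m (D.s β * x.1)) (cd.m_mem _)) v) : D.JM PiM → U))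

end GHA

open GHA in
/-- The space of H_M-module homomorphisms X|_{H_M} → U. -/
def HomHM (D : GHA) (PiM : Finset D.V) {X U : Type}
    [AddCommGroup X] [Module ℂ X] [AddCommGroup U] [Module ℂ U]
    (π : D.H →ₐ[ℂ] Module.End ℂ X)
    (σ : D.HM PiM →ₐ[ℂ] Module.End ℂ U) : Submodule ℂ (X →ₗ[ℂ] U) where
  carrier := {f | ∀ (h : D.H) (hh : h ∈ D.HM PiM) (x : X),
    f (π h x) = σ ⟨h, hh⟩ (f x)}
  zero_mem' := by intro h hh x; simp
  add_mem' := by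
    intro f g hf hg h hh x
    simp [hf h hh x, hg h hh x]
  smul_mem' := by
    intro c f hf h hh x
    simp [hf h hh x]

open GHA in
/-- The space of H-module homomorphisms X → Y. -/
def HomH (D : GHA) {X Y : Type}
    [AddCommGroup X] [Module ℂ X] [AddCommGroup Y] [Module ℂ Y]
    (π : D.H →ₐ[ℂ] Module.End ℂ X)
    (ρ : D.H →ₐ[ℂ] Module.End ℂ Y) : Submodule ℂ (X →ₗ[ℂ] Y) where
  carrier := {F | ∀ (h : D.H) (x : X), F (π h x) = ρ h (F x)}
  zero_mem' := by intro h x; simp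
  add_mem' := by
    intro F G hF hG h x
    simp [hF h x, hG h x]
  smul_mem' := by
    intro c F hF h x
    simp [hF h x]


/-! ### Auxiliary development for the proof of Statement 8 -/

namespace GHA

open scoped Classical

variable (D : GHA)

/-- an auxiliary positive definite form coming from a basis -/
noncomputable def B0 (v w : D.V) : ℝ :=
  ∑ i, ((Module.finBasis ℝ D.V).repr v i) * ((Module.finBasis ℝ D.V).repr w i)

lemma B0_symm (v w : D.V) : D.B0 v w = D.B0 w v := by
  unfold B0; exact Finset.sum_congr rfl (fun i _ => mul_comm _ _)

lemma B0_add_left (v v' w : D.V) : D.B0 (v + v') w = D.B0 v w + D.B0 v' w := by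
  unfold B0; rw [← Finset.sum_add_distrib]
  refine Finset.sum_congr rfl (fun i _ => ?_)
  rw [map_add, Finsupp.add_apply, add_mul]

lemma B0_smul_left (r : ℝ) (v w : D.V) : D.B0 (r • v) w = r * D.B0 v w := by
  unfold B0; rw [Finset.mul_sum]
  refine Finset.sum_congr rfl (fun i _ => ?_)
  rw [map_smul, Finsupp.smul_apply, smul_eq_mul, mul_assoc]

lemma B0_nonneg (v : D.V) : 0 ≤ D.B0 v v :=
  Finset.sum_nonneg (fun i _ => mul_self_nonneg _)

lemma B0_pos (v : D.V) (hv : v ≠ 0) : 0 < D.B0 v v := by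
  have hrepr : (Module.finBasis ℝ D.V).repr v ≠ 0 := by
    intro h
    exact hv (by simpa [h] using ((Module.finBasis ℝ D.V).repr.symm_apply_apply v).symm)
  obtain ⟨i, hi⟩ : ∃ i, (Module.finBasis ℝ D.V).repr v i ≠ 0 := by
    by_contra h
    push_neg at h
    exact hrepr (Finsupp.ext h)
  refine Finset.sum_pos' (fun j _ => mul_self_nonneg _) ⟨i, Finset.mem_univ i, ?_⟩
  exact mul_self_pos.mpr hi

/-- W-invariant inner product -/
noncomputable def ip (v w : D.V) : ℝ := ∑ u : D.W, D.B0 (D.actV u v) (D.actV u w)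

lemma ip_symm (v w : D.V) : D.ip v w = D.ip w v :=
  Finset.sum_congr rfl (fun u _ => D.B0_symm _ _)

lemma ip_add_left (v v' w : D.V) : D.ip (v + v') w = D.ip v w + D.ip v' w := by
  unfold ip; rw [← Finset.sum_add_distrib]
  exact Finset.sum_congr rfl (fun u _ => by rw [map_add, D.B0_add_left])

lemma ip_smul_left (r : ℝ) (v w : D.V) : D.ip (r • v) w = r * D.ip v w := by
  unfold ip; rw [Finset.mul_sum]
  exact Finset.sum_congr rfl (fun u _ => by rw [map_smul, D.B0_smul_left])

lemma ip_add_right (v w w' : D.V) : D.ip v (w + w') = D.ip v w + D.ip v w' := by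
  rw [D.ip_symm, D.ip_add_left, D.ip_symm w v, D.ip_symm w' v]

lemma ip_smul_right (r : ℝ) (v w : D.V) : D.ip v (r • w) = r * D.ip v w := by
  rw [D.ip_symm, D.ip_smul_left, D.ip_symm w v]

lemma ip_neg_left (v w : D.V) : D.ip (-v) w = - D.ip v w := by
  have := D.ip_smul_left (-1) v w; simpa using this

lemma ip_neg_right (v w : D.V) : D.ip v (-w) = - D.ip v w := by
  rw [D.ip_symm, D.ip_neg_left, D.ip_symm v w]

lemma ip_invariant (g : D.W) (v w : D.V) : D.ip (D.actV g v) (D.actV g w) = D.ip v w := by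
  unfold ip
  refine Fintype.sum_equiv (Equiv.mulRight g) _ _ (fun u => ?_)
  have h1 : D.actV (u * g) v = D.actV u (D.actV g v) := by rw [map_mul]; rfl
  have h2 : D.actV (u * g) w = D.actV u (D.actV g w) := by rw [map_mul]; rfl
  simp only [Equiv.coe_mulRight, h1, h2]

lemma ip_pos (v : D.V) (hv : v ≠ 0) : 0 < D.ip v v := by
  unfold ip
  have h1 : D.actV 1 v = v := by rw [map_one]; rfl
  refine Finset.sum_pos' (fun u _ => D.B0_nonneg _) ⟨1, Finset.mem_univ 1, ?_⟩
  rw [h1]; exact D.B0_pos v hv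

lemma ip_self_ne_zero (v : D.V) (hv : v ≠ 0) : D.ip v v ≠ 0 := (D.ip_pos v hv).ne'

lemma root_ne_zero' {γ : D.V} (hγ : γ ∈ D.roots) : γ ≠ 0 := D.roots_ne_zero γ hγ

/-- the fundamental formula relating the pairing to the invariant inner product -/
lemma ip_expand (x y : D.V) (p : ℝ) :
    D.ip (x - p • y) (x - p • y) = D.ip x x - 2 * p * D.ip x y + p * p * D.ip y y := by
  rw [sub_eq_add_neg, ← neg_smul, D.ip_add_left, D.ip_add_right, D.ip_add_right,
    D.ip_smul_left, D.ip_smul_right, D.ip_smul_left, D.ip_smul_right, D.ip_symm y x]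
  ring

/-- the fundamental formula relating the pairing to the invariant inner product -/
lemma pair_ip {γ : D.V} (hγ : γ ∈ D.roots) (v : D.V) :
    D.pairR v (D.cv γ) * D.ip γ γ = 2 * D.ip v γ := by
  have key : ∀ x : D.V, D.pairR x (D.cv γ) * (D.pairR x (D.cv γ) * D.ip γ γ - 2 * D.ip x γ) = 0 := by
    intro x
    have hinv := D.ip_invariant (D.s γ) x x
    rw [D.actV_s γ hγ, D.ip_expand] at hinv
    nlinarith [hinv]
  by_cases hp : D.pairR v (D.cv γ) = 0
  · -- use v + γ
    have h2 : D.pairR (v + γ) (D.cv γ) = 2 := by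
      rw [map_add, LinearMap.add_apply, hp, D.pair_cv_self γ hγ, zero_add]
    have hk := key (v + γ)
    rw [h2, D.ip_add_left] at hk
    have hvγ : D.ip v γ = 0 := by linarith
    rw [hp, hvγ]; ring
  · have hk := key v
    rcases mul_eq_zero.mp hk with h | h
    · exact absurd h hp
    · linarith

lemma actV_apply_mul (g h : D.W) (v : D.V) : D.actV (g * h) v = D.actV g (D.actV h v) := by
  rw [map_mul]; rfl

lemma actV_one_apply (v : D.V) : D.actV 1 v = v := by rw [map_one]; rfl

lemma actV_inv_apply (g : D.W) (v : D.V) : D.actV g (D.actV g⁻¹ v) = v := by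
  rw [← D.actV_apply_mul, mul_inv_cancel, D.actV_one_apply]

lemma eq_of_actV_eq {g h : D.W} (H : ∀ v, D.actV g v = D.actV h v) : g = h := by
  have : g * h⁻¹ = 1 := by
    apply D.actV_faithful
    intro v
    rw [D.actV_apply_mul, H (D.actV h⁻¹ v), D.actV_inv_apply]
  · calc g = g * h⁻¹ * h := by group
      _ = 1 * h := by rw [this]
      _ = h := one_mul h

/-- formula for the reflection in terms of the invariant product -/
lemma actV_s_ip {γ : D.V} (hγ : γ ∈ D.roots) (v : D.V) :
    D.ip γ γ • D.actV (D.s γ) v = D.ip γ γ • v - (2 * D.ip v γ) • γ := by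
  rw [D.actV_s γ hγ, smul_sub, smul_smul, mul_comm (D.ip γ γ), D.pair_ip hγ v]

lemma s_proportional {γ γ' : D.V} (hγ : γ ∈ D.roots) (hγ' : γ' ∈ D.roots) {c : ℝ}
    (hc : c ≠ 0) (h : γ' = c • γ) : D.s γ' = D.s γ := by
  subst h
  apply D.eq_of_actV_eq
  intro v
  have hγ0 := D.root_ne_zero' hγ
  have hipγ := D.ip_self_ne_zero γ hγ0
  have e1 := D.actV_s_ip hγ v
  have e2 := D.actV_s_ip hγ' v
  rw [D.ip_smul_left, D.ip_smul_right, D.ip_smul_right] at e2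
  have e1c := congrArg (fun z => (c * c) • z) e1
  simp only [smul_smul, smul_sub] at e1c
  have key : (c * (c * D.ip γ γ)) • D.actV (D.s (c • γ)) v
      = (c * (c * D.ip γ γ)) • D.actV (D.s γ) v := by
    rw [e2, show c * (c * D.ip γ γ) = c * c * D.ip γ γ by ring, e1c]
    module
  have hne : (c * (c * D.ip γ γ)) ≠ 0 := mul_ne_zero hc (mul_ne_zero hc hipγ)
  exact smul_right_injective D.V hne key

lemma conj_s {γ : D.V} (hγ : γ ∈ D.roots) (w : D.W) :
    w * D.s γ * w⁻¹ = D.s (D.actV w γ) := by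
  have hwγ : D.actV w γ ∈ D.roots := D.actV_roots w γ hγ
  apply D.eq_of_actV_eq
  intro v
  have lhs : D.actV (w * D.s γ * w⁻¹) v
      = v - D.pairR (D.actV w⁻¹ v) (D.cv γ) • D.actV w γ := by
    rw [D.actV_apply_mul, D.actV_apply_mul, D.actV_s γ hγ, map_sub, map_smul,
      D.actV_inv_apply]
  rw [lhs, D.actV_s _ hwγ]
  congr 2
  -- pairR (w⁻¹ v) (cv γ) = pairR v (cv (w γ))
  have h1 := D.pair_ip hγ (D.actV w⁻¹ v)
  have h2 := D.pair_ip hwγ v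
  have h3 : D.ip (D.actV w⁻¹ v) γ = D.ip v (D.actV w γ) := by
    rw [← D.ip_invariant w (D.actV w⁻¹ v) γ, D.actV_inv_apply]
  have h4 : D.ip (D.actV w γ) (D.actV w γ) = D.ip γ γ := D.ip_invariant w γ γ
  rw [h4] at h2
  have hipγ := D.ip_self_ne_zero γ (D.root_ne_zero' hγ)
  have := h1.trans (by rw [h3, ← h2])
  exact mul_right_cancel₀ hipγ this

lemma s_invol {γ : D.V} (hγ : γ ∈ D.roots) : D.s γ * D.s γ = 1 := by
  apply D.eq_of_actV_eq
  intro v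
  have hp2 : D.pairR γ (D.cv γ) = 2 := D.pair_cv_self γ hγ
  rw [D.actV_apply_mul, D.actV_one_apply, D.actV_s γ hγ, D.actV_s γ hγ]
  rw [map_sub, LinearMap.sub_apply, map_smul, LinearMap.smul_apply, hp2, smul_eq_mul]
  module

lemma s_inv {γ : D.V} (hγ : γ ∈ D.roots) : (D.s γ)⁻¹ = D.s γ :=
  eq_inv_of_mul_eq_one_left (D.s_invol hγ) |>.symm

lemma neg_root {γ : D.V} (hγ : γ ∈ D.roots) : -γ ∈ D.roots := by
  have := D.reflV_mem γ hγ γ hγ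
  rw [D.pair_cv_self γ hγ] at this
  have h2 : γ - (2:ℝ) • γ = -γ := by module
  rwa [h2] at this


/-! ### Stage 2: positivity, descent, words and strong exchange -/

lemma simples_roots {α : D.V} (hα : α ∈ D.simples) : α ∈ D.roots :=
  D.posRoots_subset (D.simples_subset hα)

lemma pos_roots {α : D.V} (hα : α ∈ D.posRoots) : α ∈ D.roots := D.posRoots_subset hα

lemma not_pos_of_neg_pos {γ : D.V} (h : -γ ∈ D.posRoots) : γ ∉ D.posRoots :=
  fun hγ => D.posRoots_not_neg γ hγ h

lemma neg_pos_of_not_pos {γ : D.V} (hγ : γ ∈ D.roots) (h : γ ∉ D.posRoots) :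
    -γ ∈ D.posRoots := (D.roots_pos_or_neg γ hγ).resolve_left h

lemma coeff_unique (e : D.V → ℝ) (he : ∑ β ∈ D.simples, e β • β = 0) :
    ∀ β ∈ D.simples, e β = 0 := by
  have key : ∑ i : {x // x ∈ D.simples}, e i.1 • (i.1 : D.V) = 0 := by
    rw [Finset.sum_coe_sort D.simples (fun β => e β • β)]; exact he
  have h := linearIndependent_iff'.mp D.simples_linearIndependent Finset.univ
      (fun i => e i.1) key
  intro β hβ
  exact h ⟨β, hβ⟩ (Finset.mem_univ _)

lemma nonneg_comb_pos {μ : D.V} (hμ : μ ∈ D.roots) (c : D.V → ℝ)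
    (hc : ∀ γ ∈ D.simples, 0 ≤ c γ) (hsum : μ = ∑ γ ∈ D.simples, c γ • γ) :
    μ ∈ D.posRoots := by
  by_contra hneg
  have hmneg : -μ ∈ D.posRoots := (D.roots_pos_or_neg μ hμ).resolve_left hneg
  obtain ⟨c', hc', hsum'⟩ := D.posRoots_nonneg_comb (-μ) hmneg
  have hzero : ∑ γ ∈ D.simples, (c γ + c' γ) • γ = 0 := by
    simp only [add_smul]
    rw [Finset.sum_add_distrib, ← hsum, ← hsum']
    abel
  have hall := D.coeff_unique _ hzero
  have hczero : ∀ γ ∈ D.simples, c γ = 0 := by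
    intro γ hγ
    have h1 := hall γ hγ
    have h2 := hc' γ hγ
    have h3 := hc γ hγ
    linarith
  have : μ = 0 := by
    rw [hsum]
    exact Finset.sum_eq_zero (fun γ hγ => by rw [hczero γ hγ, zero_smul])
  exact D.roots_ne_zero μ hμ this

lemma smul_pos_root {β : D.V} (hβ : β ∈ D.posRoots) {t : ℝ} (ht : 0 < t)
    (hroot : t • β ∈ D.roots) : t • β ∈ D.posRoots := by
  obtain ⟨c, hc, hsum⟩ := D.posRoots_nonneg_comb β hβ
  refine D.nonneg_comb_pos hroot (fun γ => t * c γ)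
    (fun γ hγ => mul_nonneg ht.le (hc γ hγ)) ?_
  rw [hsum, Finset.smul_sum]
  exact Finset.sum_congr rfl (fun γ _ => (smul_smul t (c γ) γ).symm ▸ rfl)

lemma pos_root_span_simple {α β : D.V} (hα : α ∈ D.simples) (hβ : β ∈ D.posRoots)
    (hspan : β ∈ (Submodule.span ℝ {α} : Submodule ℝ D.V)) :
    ∃ t : ℝ, 0 < t ∧ β = t • α := by
  obtain ⟨t, ht⟩ := Submodule.mem_span_singleton.mp hspan
  obtain ⟨c, hc, hsum⟩ := D.posRoots_nonneg_comb β hβ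
  have hsing : ∑ γ ∈ D.simples, (if γ = α then t else 0) • γ = t • α := by
    simp only [ite_smul, zero_smul]
    rw [Finset.sum_ite_eq' D.simples α (fun γ => t • γ), if_pos hα]
  have hzero : ∑ γ ∈ D.simples, (c γ - if γ = α then t else 0) • γ = 0 := by
    simp only [sub_smul]
    rw [Finset.sum_sub_distrib, ← hsum, hsing, ht, sub_self]
  have hall := D.coeff_unique _ hzero
  have hcα : c α = t := by
    have := hall α hα
    simp at this
    linarith
  have ht0 : 0 < t := by
    rcases lt_or_eq_of_le (hcα ▸ hc α hα) with h | h
    · exact h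
    · exfalso
      apply D.roots_ne_zero β (D.pos_roots hβ)
      rw [← ht, ← h, zero_smul]
  exact ⟨t, ht0, ht.symm⟩

lemma simple_reflection_pos {α β : D.V} (hα : α ∈ D.simples) (hβ : β ∈ D.posRoots)
    (hnot : β ∉ (Submodule.span ℝ {α} : Submodule ℝ D.V)) :
    D.actV (D.s α) β ∈ D.posRoots := by
  have hαr := D.simples_roots hα
  have hβr := D.pos_roots hβ
  have hroot : D.actV (D.s α) β ∈ D.roots := D.actV_roots _ β hβr
  by_contra hneg
  have hneg' : -(D.actV (D.s α) β) ∈ D.posRoots := D.neg_pos_of_not_pos hroot hneg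
  obtain ⟨e, he, hesum⟩ := D.posRoots_nonneg_comb _ hneg'
  obtain ⟨c, hc, hsum⟩ := D.posRoots_nonneg_comb β hβ
  rw [D.actV_s α hαr] at hesum
  set p := D.pairR β (D.cv α) with hp
  have hsing : ∑ γ ∈ D.simples, (if γ = α then p else 0) • γ = p • α := by
    simp only [ite_smul, zero_smul]
    rw [Finset.sum_ite_eq' D.simples α (fun γ => p • γ), if_pos hα]
  have hzero : ∑ γ ∈ D.simples, (c γ + e γ - if γ = α then p else 0) • γ = 0 := by
    simp only [add_smul, sub_smul]
    rw [Finset.sum_sub_distrib, Finset.sum_add_distrib, ← hsum, ← hesum, hsing]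
    abel
  have hall := D.coeff_unique _ hzero
  have hcz : ∀ γ ∈ D.simples, γ ≠ α → c γ = 0 := by
    intro γ hγ hne
    have h1 := hall γ hγ
    rw [if_neg hne, sub_zero] at h1
    have h2 := hc γ hγ
    have h3 := he γ hγ
    linarith
  have hβα : β = c α • α := by
    rw [hsum, Finset.sum_eq_single α]
    · intro γ hγ hne
      rw [hcz γ hγ hne, zero_smul]
    · intro habs; exact absurd hα habs
  exact hnot (hβα ▸ Submodule.smul_mem _ _ (Submodule.mem_span_singleton_self α))

lemma actV_s_self {α : D.V} (hα : α ∈ D.roots) : D.actV (D.s α) α = -α := by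
  rw [D.actV_s α hα, D.pair_cv_self α hα]
  module

lemma actV_s_s {α : D.V} (hα : α ∈ D.roots) (v : D.V) :
    D.actV (D.s α) (D.actV (D.s α) v) = v := by
  rw [← D.actV_apply_mul, D.s_invol hα, D.actV_one_apply]

lemma descent {w : D.W} (hw : w ≠ 1) : ∃ α ∈ D.simples, D.actV w α ∉ D.posRoots := by
  by_contra h
  push_neg at h
  have hpos : ∀ β ∈ D.posRoots, D.actV w β ∈ D.posRoots := by
    intro β hβ
    obtain ⟨c, hc, hsum⟩ := D.posRoots_nonneg_comb β hβ
    have hd : ∀ γ : {x // x ∈ D.simples}, ∃ dγ : D.V → ℝ,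
        (∀ δ ∈ D.simples, 0 ≤ dγ δ) ∧ D.actV w γ.1 = ∑ δ ∈ D.simples, dγ δ • δ :=
      fun γ => D.posRoots_nonneg_comb _ (h γ.1 γ.2)
    choose dfun hd1 hd2 using hd
    have step1 : D.actV w β = ∑ γ ∈ D.simples.attach, c γ.1 • D.actV w γ.1 := by
      rw [hsum, map_sum,
        ← Finset.sum_attach D.simples (fun γ => D.actV w (c γ • γ))]
      exact Finset.sum_congr rfl (fun γ _ => by rw [map_smul])
    have step2 : D.actV w β
        = ∑ γ ∈ D.simples.attach, ∑ δ ∈ D.simples, (c γ.1 * dfun γ δ) • δ := by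
      rw [step1]
      refine Finset.sum_congr rfl (fun γ _ => ?_)
      rw [hd2 γ, Finset.smul_sum]
      exact Finset.sum_congr rfl (fun δ _ => smul_smul _ _ _)
    have step3 : D.actV w β
        = ∑ δ ∈ D.simples, (∑ γ ∈ D.simples.attach, c γ.1 * dfun γ δ) • δ := by
      rw [step2, Finset.sum_comm]
      exact Finset.sum_congr rfl (fun δ _ => by rw [Finset.sum_smul])
    exact D.nonneg_comb_pos (D.actV_roots w β (D.pos_roots hβ)) _
      (fun δ hδ => Finset.sum_nonneg
        (fun γ _ => mul_nonneg (hc γ.1 γ.2) (hd1 γ δ hδ))) step3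
  have hw0 : w * D.w0 = D.w0 := by
    apply D.w0_unique
    intro β hβ
    have h1 : -(D.actV D.w0 β) ∈ D.posRoots := D.w0_neg β hβ
    have h2 := hpos _ h1
    rw [map_neg] at h2
    rw [D.actV_apply_mul]
    exact h2
  exact hw (mul_right_cancel (b := D.w0) (by rw [one_mul]; exact hw0))

/-! ### Stage 2b: Nhat, words, minimal length, strong exchange -/

/-- set of positive root lines made negative by w -/
noncomputable def Nhat (w : D.W) : Finset (Submodule ℝ D.V) :=
  (D.posRoots.filter (fun γ => D.actV w γ ∉ D.posRoots)).image
    (fun γ => Submodule.span ℝ {γ})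

lemma mem_Nhat {w : D.W} {L : Submodule ℝ D.V} :
    L ∈ D.Nhat w ↔ ∃ γ ∈ D.posRoots, D.actV w γ ∉ D.posRoots ∧ Submodule.span ℝ {γ} = L := by
  unfold Nhat
  simp only [Finset.mem_image, Finset.mem_filter]
  constructor
  · rintro ⟨γ, ⟨h1, h2⟩, h3⟩; exact ⟨γ, h1, h2, h3⟩
  · rintro ⟨γ, h1, h2, h3⟩; exact ⟨γ, ⟨h1, h2⟩, h3⟩

lemma Nhat_one : D.Nhat 1 = ∅ := by
  unfold Nhat
  rw [Finset.filter_false_of_mem, Finset.image_empty]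
  intro γ hγ
  rw [D.actV_one_apply]
  simp [hγ]

lemma span_eq_of_smul {γ δ : D.V} {t : ℝ} (ht : t ≠ 0) (h : δ = t • γ) :
    (Submodule.span ℝ {δ} : Submodule ℝ D.V) = Submodule.span ℝ {γ} := by
  rw [h]; exact Submodule.span_singleton_smul_eq (IsUnit.mk0 t ht) γ

/-- image of a line under the reflection s_α -/
noncomputable def phiL (α : D.V) (L : Submodule ℝ D.V) : Submodule ℝ D.V :=
  Submodule.map (D.actV (D.s α)).toLinearMap L

lemma phiL_span {α γ : D.V} :
    D.phiL α (Submodule.span ℝ {γ}) = Submodule.span ℝ {D.actV (D.s α) γ} := by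
  unfold phiL
  rw [Submodule.map_span, Set.image_singleton]
  rfl

lemma phiL_inj (α : D.V) : Function.Injective (D.phiL α) :=
  Submodule.map_injective_of_injective (D.actV (D.s α)).injective

lemma span_α_mem_iff {α γ : D.V} (hα : α ∈ D.simples) (hγ : γ ∈ D.posRoots) :
    (Submodule.span ℝ {γ} : Submodule ℝ D.V) = Submodule.span ℝ {α}
      ↔ γ ∈ (Submodule.span ℝ {α} : Submodule ℝ D.V) := by
  constructor
  · intro h; rw [← h]; exact Submodule.mem_span_singleton_self γ
  · intro h
    obtain ⟨t, ht, rfl⟩ := D.pos_root_span_simple hα hγ h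
    exact D.span_eq_of_smul ht.ne' rfl

lemma Nhat_mul_s_subset {α : D.V} (hα : α ∈ D.simples) (w : D.W) :
    D.Nhat (w * D.s α) ⊆ insert (Submodule.span ℝ {α}) ((D.Nhat w).image (D.phiL α)) := by
  intro L hL
  obtain ⟨γ, hγ, hneg, hspan⟩ := D.mem_Nhat.mp hL
  by_cases hmem : γ ∈ (Submodule.span ℝ {α} : Submodule ℝ D.V)
  · rw [Finset.mem_insert]
    left
    rw [← hspan]
    exact (D.span_α_mem_iff hα hγ).mpr hmem
  · have hγ' : D.actV (D.s α) γ ∈ D.posRoots := D.simple_reflection_pos hα hγ hmem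
    have hwγ' : D.actV w (D.actV (D.s α) γ) ∉ D.posRoots := by
      rwa [D.actV_apply_mul] at hneg
    rw [Finset.mem_insert]
    right
    rw [Finset.mem_image]
    refine ⟨Submodule.span ℝ {D.actV (D.s α) γ}, ?_, ?_⟩
    · exact D.mem_Nhat.mpr ⟨_, hγ', hwγ', rfl⟩
    · rw [D.phiL_span, ← hspan]
      congr 1
      rw [D.actV_s_s (D.simples_roots hα)]

lemma card_Nhat_mul_s_le {α : D.V} (hα : α ∈ D.simples) (w : D.W) :
    (D.Nhat (w * D.s α)).card ≤ (D.Nhat w).card + 1 := by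
  calc (D.Nhat (w * D.s α)).card
      ≤ (insert (Submodule.span ℝ {α}) ((D.Nhat w).image (D.phiL α))).card :=
        Finset.card_le_card (D.Nhat_mul_s_subset hα w)
    _ ≤ ((D.Nhat w).image (D.phiL α)).card + 1 := Finset.card_insert_le _ _
    _ ≤ (D.Nhat w).card + 1 := by
        have := Finset.card_image_le (s := D.Nhat w) (f := D.phiL α)
        omega

lemma Nhat_mul_s_of_neg {α : D.V} (hα : α ∈ D.simples) {w : D.W}
    (hwα : D.actV w α ∉ D.posRoots) :
    D.Nhat (w * D.s α) = ((D.Nhat w).erase (Submodule.span ℝ {α})).image (D.phiL α) := by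
  have hαr := D.simples_roots hα
  apply Finset.Subset.antisymm
  · intro L hL
    obtain ⟨γ, hγ, hneg, hspan⟩ := D.mem_Nhat.mp hL
    by_cases hmem : γ ∈ (Submodule.span ℝ {α} : Submodule ℝ D.V)
    · exfalso
      obtain ⟨t, ht, rfl⟩ := D.pos_root_span_simple hα hγ hmem
      apply hneg
      have hcalc : D.actV (w * D.s α) (t • α) = t • -(D.actV w α) := by
        rw [D.actV_apply_mul, map_smul, D.actV_s_self hαr, map_smul, map_neg]
      rw [hcalc]
      have hnwα : -(D.actV w α) ∈ D.posRoots :=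
        D.neg_pos_of_not_pos (D.actV_roots w α hαr) hwα
      apply D.smul_pos_root hnwα ht
      rw [← hcalc]
      exact D.actV_roots _ _ (D.pos_roots hγ)
    · have hγ' : D.actV (D.s α) γ ∈ D.posRoots := D.simple_reflection_pos hα hγ hmem
      have hwγ' : D.actV w (D.actV (D.s α) γ) ∉ D.posRoots := by
        rwa [D.actV_apply_mul] at hneg
      rw [Finset.mem_image]
      refine ⟨Submodule.span ℝ {D.actV (D.s α) γ}, ?_, ?_⟩
      · rw [Finset.mem_erase]
        constructor
        · intro habs
          apply hmem
          have := (D.span_α_mem_iff hα hγ').mp habs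
          have hγeq : γ = D.actV (D.s α) (D.actV (D.s α) γ) := (D.actV_s_s hαr γ).symm
          obtain ⟨t, ht, hte⟩ := D.pos_root_span_simple hα hγ' this
          rw [hγeq, hte, map_smul, D.actV_s_self hαr, smul_neg]
          exact Submodule.neg_mem _ (Submodule.smul_mem _ _ (Submodule.mem_span_singleton_self α))
        · exact D.mem_Nhat.mpr ⟨_, hγ', hwγ', rfl⟩
      · rw [D.phiL_span, ← hspan]
        congr 1
        rw [D.actV_s_s hαr]
  · intro L hL
    rw [Finset.mem_image] at hL
    obtain ⟨L', hL', hphiL⟩ := hL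
    rw [Finset.mem_erase] at hL'
    obtain ⟨hLne, hLmem⟩ := hL'
    obtain ⟨δ, hδ, hwδ, hspanδ⟩ := D.mem_Nhat.mp hLmem
    have hδnot : δ ∉ (Submodule.span ℝ {α} : Submodule ℝ D.V) := by
      intro habs
      exact hLne (hspanδ ▸ (D.span_α_mem_iff hα hδ).mpr habs)
    have hγ : D.actV (D.s α) δ ∈ D.posRoots := D.simple_reflection_pos hα hδ hδnot
    apply D.mem_Nhat.mpr
    refine ⟨D.actV (D.s α) δ, hγ, ?_, ?_⟩
    · rw [D.actV_apply_mul, D.actV_s_s hαr]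
      exact hwδ
    · rw [← hphiL, ← hspanδ, D.phiL_span]

lemma span_simple_mem_Nhat {α : D.V} (hα : α ∈ D.simples) {w : D.W}
    (hwα : D.actV w α ∉ D.posRoots) : Submodule.span ℝ {α} ∈ D.Nhat w :=
  D.mem_Nhat.mpr ⟨α, D.simples_subset hα, hwα, rfl⟩

lemma card_Nhat_mul_s_of_neg {α : D.V} (hα : α ∈ D.simples) {w : D.W}
    (hwα : D.actV w α ∉ D.posRoots) :
    (D.Nhat (w * D.s α)).card + 1 = (D.Nhat w).card := by
  rw [D.Nhat_mul_s_of_neg hα hwα,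
    Finset.card_image_of_injective _ (D.phiL_inj α),
    Finset.card_erase_of_mem (D.span_simple_mem_Nhat hα hwα)]
  have := Finset.card_pos.mpr ⟨_, D.span_simple_mem_Nhat hα hwα⟩
  omega

/-- words in simple reflections -/
def IsWord (l : List D.V) (w : D.W) : Prop :=
  (∀ α ∈ l, α ∈ D.simples) ∧ (l.map D.s).prod = w

lemma exists_word_of_card (n : ℕ) : ∀ w : D.W, (D.Nhat w).card ≤ n →
    ∃ l, D.IsWord l w ∧ l.length ≤ n := by
  induction n with
  | zero =>
    intro w hw
    by_cases h1 : w = 1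
    · exact ⟨[], ⟨fun α h => absurd h List.not_mem_nil, by simp [h1]⟩, by simp⟩
    · obtain ⟨α, hα, hwα⟩ := D.descent h1
      exfalso
      have := Finset.card_pos.mpr ⟨_, D.span_simple_mem_Nhat hα hwα⟩
      omega
  | succ n ih =>
    intro w hw
    by_cases h1 : w = 1
    · exact ⟨[], ⟨fun α h => absurd h List.not_mem_nil, by simp [h1]⟩, by simp⟩
    · obtain ⟨α, hα, hwα⟩ := D.descent h1
      have hcard := D.card_Nhat_mul_s_of_neg hα hwα
      obtain ⟨l, ⟨hl1, hl2⟩, hlen⟩ := ih (w * D.s α) (by omega)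
      refine ⟨l ++ [α], ⟨?_, ?_⟩, ?_⟩
      · intro β hβ
        rcases List.mem_append.mp hβ with h | h
        · exact hl1 β h
        · rw [List.mem_singleton.mp h]; exact hα
      · rw [List.map_append, List.prod_append]
        simp only [List.map_cons, List.map_nil, List.prod_cons, List.prod_nil, mul_one]
        rw [hl2, mul_assoc, D.s_invol (D.simples_roots hα), mul_one]
      · rw [List.length_append, List.length_singleton]
        omega

lemma exists_word (w : D.W) : ∃ n : ℕ, ∃ l, D.IsWord l w ∧ l.length = n := by
  obtain ⟨l, hl, _⟩ := D.exists_word_of_card (D.Nhat w).card w le_rfl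
  exact ⟨l.length, l, hl, rfl⟩

/-- minimal length of a word for w -/
noncomputable def len (w : D.W) : ℕ := Nat.find (D.exists_word w)

lemma len_spec (w : D.W) : ∃ l, D.IsWord l w ∧ l.length = D.len w :=
  Nat.find_spec (D.exists_word w)

lemma len_le {l : List D.V} {w : D.W} (h : D.IsWord l w) : D.len w ≤ l.length :=
  Nat.find_le ⟨l, h, rfl⟩

lemma len_le_card (w : D.W) : D.len w ≤ (D.Nhat w).card := by
  obtain ⟨l, hl, hlen⟩ := D.exists_word_of_card (D.Nhat w).card w le_rfl
  exact le_trans (D.len_le hl) hlen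

lemma card_le_word (l : List D.V) : ∀ w, D.IsWord l w → (D.Nhat w).card ≤ l.length := by
  induction l using List.reverseRecOn with
  | nil =>
    intro w hw
    have : w = 1 := by simpa using hw.2.symm
    rw [this, D.Nhat_one]
    simp
  | append_singleton l α ih =>
    intro w hw
    obtain ⟨hmem, hprod⟩ := hw
    have hα : α ∈ D.simples := hmem α (by simp)
    set w' := (l.map D.s).prod with hw'def
    have hw'w : w = w' * D.s α := by
      rw [← hprod, List.map_append, List.prod_append]
      simp
      exact hw'def.symm
    have h1 := ih w' ⟨fun β hβ => hmem β (by simp [hβ]), rfl⟩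
    have h2 := D.card_Nhat_mul_s_le hα w'
    rw [hw'w, List.length_append, List.length_singleton]
    omega

lemma card_le_len (w : D.W) : (D.Nhat w).card ≤ D.len w := by
  obtain ⟨l, hl, hlen⟩ := D.len_spec w
  rw [← hlen]
  exact D.card_le_word l w hl

/-- the strong exchange property -/
lemma exchange (l : List D.V) : ∀ (β : D.V), β ∈ D.posRoots →
    ∀ w, D.IsWord l w → D.actV w⁻¹ β ∉ D.posRoots →
    ∃ l', D.IsWord l' (D.s β * w) ∧ l'.length + 1 = l.length := by
  induction l with
  | nil =>
    intro β hβ w hw hneg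
    exfalso
    have hw1 : w = 1 := by simpa using hw.2.symm
    rw [hw1] at hneg
    simp only [inv_one] at hneg
    rw [D.actV_one_apply] at hneg
    exact hneg hβ
  | cons α l ih =>
    intro β hβ w hw hneg
    obtain ⟨hmem, hprod⟩ := hw
    have hα : α ∈ D.simples := hmem α (by simp)
    have hαr := D.simples_roots hα
    set w' := (l.map D.s).prod with hw'def
    have hw'w : w = D.s α * w' := by
      rw [← hprod]; simp
      exact hw'def.symm
    have hβr : β ∈ D.roots := D.pos_roots hβ
    set β₁ := D.actV (D.s α) β with hβ₁def
    have hβ₁root : β₁ ∈ D.roots := D.actV_roots _ _ hβr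
    have hββ₁ : β = D.actV (D.s α) β₁ := (D.actV_s_s hαr β).symm
    by_cases hcase : β₁ ∈ D.posRoots
    · have hneg' : D.actV w'⁻¹ β₁ ∉ D.posRoots := by
        have hinv : w⁻¹ = w'⁻¹ * D.s α := by
          rw [hw'w, mul_inv_rev, D.s_inv hαr]
        rw [hinv, D.actV_apply_mul] at hneg
        exact hneg
      obtain ⟨l'', hl'', hlen⟩ := ih β₁ hcase w' ⟨fun γ hγ => hmem γ (by simp [hγ]), rfl⟩ hneg'
      have hconj : D.s β = D.s α * D.s β₁ * (D.s α)⁻¹ := by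
        rw [hββ₁, ← D.conj_s hβ₁root (D.s α)]
      refine ⟨α :: l'', ⟨?_, ?_⟩, ?_⟩
      · intro γ hγ
        rcases List.mem_cons.mp hγ with h | h
        · rw [h]; exact hα
        · exact hl''.1 γ h
      · simp only [List.map_cons, List.prod_cons]
        rw [hl''.2, hconj, hw'w, D.s_inv hαr]
        have hx : D.s α * (D.s α * w') = w' := by
          rw [← mul_assoc, D.s_invol hαr, one_mul]
        rw [mul_assoc (D.s α * D.s β₁) (D.s α) (D.s α * w'), hx, mul_assoc]
      · simp only [List.length_cons]
        omega
    · -- β is proportional to α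
      have hspan : β ∈ (Submodule.span ℝ {α} : Submodule ℝ D.V) := by
        by_contra habs
        exact hcase (D.simple_reflection_pos hα hβ habs)
      obtain ⟨t, ht, hte⟩ := D.pos_root_span_simple hα hβ hspan
      have hsβ : D.s β = D.s α := D.s_proportional hαr hβr ht.ne' hte
      refine ⟨l, ⟨fun γ hγ => hmem γ (by simp [hγ]), ?_⟩, by simp⟩
      rw [hsβ, hw'w, ← mul_assoc, D.s_invol hαr, one_mul]

lemma len_s_mul_lt {β : D.V} {w : D.W} (hβ : β ∈ D.posRoots)
    (hneg : D.actV w⁻¹ β ∉ D.posRoots) : D.len (D.s β * w) < D.len w := by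
  obtain ⟨l, hl, hlen⟩ := D.len_spec w
  obtain ⟨l', hl', hlen'⟩ := D.exchange l β hβ w hl hneg
  have := D.len_le hl'
  omega

/-! ### Stage 3: the longest element, parabolic subgroups, conjugation -/

lemma w0_inv_flip : ∀ α ∈ D.posRoots, -(D.actV D.w0⁻¹ α) ∈ D.posRoots := by
  intro α hα
  have hαr := D.pos_roots hα
  have hδr : D.actV D.w0⁻¹ α ∈ D.roots := D.actV_roots _ _ hαr
  by_contra h
  have hδ : D.actV D.w0⁻¹ α ∈ D.posRoots := (D.roots_pos_or_neg _ hδr).resolve_right h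
  have := D.w0_neg _ hδ
  rw [D.actV_inv_apply] at this
  exact D.posRoots_not_neg α hα this

lemma w0_inv : D.w0⁻¹ = D.w0 := D.w0_unique _ D.w0_inv_flip

lemma w0_sq : D.w0 * D.w0 = 1 := by
  have := inv_mul_cancel D.w0
  rwa [D.w0_inv] at this

lemma w0_not_pos {γ : D.V} (hγ : γ ∈ D.posRoots) : D.actV D.w0 γ ∉ D.posRoots :=
  D.not_pos_of_neg_pos (D.w0_neg γ hγ)

lemma w0_pos_of_not_pos {γ : D.V} (hγ : γ ∈ D.roots) (h : γ ∉ D.posRoots) :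
    D.actV D.w0 γ ∈ D.posRoots := by
  have h1 : -γ ∈ D.posRoots := D.neg_pos_of_not_pos hγ h
  have := D.w0_neg _ h1
  rw [map_neg, neg_neg] at this
  exact this

lemma actV_inv_apply2 (g : D.W) (v : D.V) : D.actV g⁻¹ (D.actV g v) = v := by
  rw [← D.actV_apply_mul, inv_mul_cancel, D.actV_one_apply]

lemma actV_w0_w0 (v : D.V) : D.actV D.w0 (D.actV D.w0 v) = v := by
  rw [← D.actV_apply_mul, D.w0_sq, D.actV_one_apply]

/-- every -w₀(simple) is a positive multiple of a simple root -/
lemma minusw0_simple {γ : D.V} (hγ : γ ∈ D.simples) :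
    ∃ α ∈ D.simples, ∃ c : ℝ, 0 < c ∧ -(D.actV D.w0 γ) = c • α := by
  have hγp : γ ∈ D.posRoots := D.simples_subset hγ
  have hγ' : -(D.actV D.w0 γ) ∈ D.posRoots := D.w0_neg γ hγp
  set γ' := -(D.actV D.w0 γ) with hγ'def
  obtain ⟨c, hc, hsum⟩ := D.posRoots_nonneg_comb γ' hγ'
  have hδ : ∀ α : {x // x ∈ D.simples}, ∃ dα : D.V → ℝ,
      (∀ δ ∈ D.simples, 0 ≤ dα δ) ∧ -(D.actV D.w0 α.1) = ∑ δ ∈ D.simples, dα δ • δ :=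
    fun α => D.posRoots_nonneg_comb _ (D.w0_neg α.1 (D.simples_subset α.2))
  choose dfun hd1 hd2 using hδ
  -- γ = ∑_β (∑_α c α * d α β) • β
  have hback : γ = -(D.actV D.w0 γ') := by
    rw [hγ'def, map_neg, D.actV_w0_w0, neg_neg]
  have step1 : γ = ∑ α ∈ D.simples.attach, c α.1 • -(D.actV D.w0 α.1) := by
    rw [hback, hsum, map_sum, ← Finset.sum_neg_distrib,
      ← Finset.sum_attach D.simples (fun α => -(D.actV D.w0 (c α • α)))]
    exact Finset.sum_congr rfl (fun α _ => by rw [map_smul, smul_neg])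
  have step2 : γ = ∑ β ∈ D.simples, (∑ α ∈ D.simples.attach, c α.1 * dfun α β) • β := by
    rw [step1]
    rw [show (∑ α ∈ D.simples.attach, c α.1 • -(D.actV D.w0 α.1))
        = ∑ α ∈ D.simples.attach, ∑ β ∈ D.simples, (c α.1 * dfun α β) • β from
      Finset.sum_congr rfl (fun α _ => by
        rw [hd2 α, Finset.smul_sum]
        exact Finset.sum_congr rfl (fun δ _ => smul_smul _ _ _))]
    rw [Finset.sum_comm]
    exact Finset.sum_congr rfl (fun δ _ => by rw [Finset.sum_smul])
  -- uniqueness of coefficients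
  have hzero : ∑ β ∈ D.simples,
      ((∑ α ∈ D.simples.attach, c α.1 * dfun α β) - if β = γ then 1 else 0) • β = 0 := by
    simp only [sub_smul, ite_smul, zero_smul, one_smul]
    rw [Finset.sum_sub_distrib, ← step2, Finset.sum_ite_eq' D.simples γ (fun β => β),
      if_pos hγ, sub_self]
  have hall := D.coeff_unique _ hzero
  have hne : ∃ α ∈ D.simples.attach, c α.1 ≠ 0 := by
    by_contra h
    push_neg at h
    apply D.roots_ne_zero γ' (D.pos_roots hγ')
    rw [hsum, ← Finset.sum_attach D.simples (fun α => c α • α)]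
    exact Finset.sum_eq_zero (fun α hα => by rw [h α hα, zero_smul])
  obtain ⟨α₀, hα₀, hcα₀⟩ := hne
  have hcα₀pos : 0 < c α₀.1 := lt_of_le_of_ne (hc α₀.1 α₀.2) (Ne.symm hcα₀)
  have hzero2 : ∀ β ∈ D.simples, β ≠ γ → dfun α₀ β = 0 := by
    intro β hβ hne'
    have h1 := hall β hβ
    rw [if_neg hne', sub_zero] at h1
    have h2 := Finset.sum_eq_zero_iff_of_nonneg
      (fun α _ => mul_nonneg (hc α.1 α.2) (hd1 α β hβ)) |>.mp h1 α₀ hα₀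
    rcases mul_eq_zero.mp h2 with h | h
    · exact absurd h hcα₀
    · exact h
  have hδα₀ : -(D.actV D.w0 α₀.1) = dfun α₀ γ • γ := by
    rw [hd2 α₀, Finset.sum_eq_single γ]
    · intro β hβ hne'
      rw [hzero2 β hβ hne', zero_smul]
    · intro habs; exact absurd hγ habs
  have hd₀pos : 0 < dfun α₀ γ := by
    rcases lt_or_eq_of_le (hd1 α₀ γ hγ) with h | h
    · exact h
    · exfalso
      apply D.roots_ne_zero _ (D.pos_roots (D.w0_neg α₀.1 (D.simples_subset α₀.2)))
      rw [hδα₀, ← h, zero_smul]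
  -- conclude: γ' = (dfun α₀ γ)⁻¹ • α₀
  refine ⟨α₀.1, α₀.2, (dfun α₀ γ)⁻¹, inv_pos.mpr hd₀pos, ?_⟩
  have key : α₀.1 = dfun α₀ γ • γ' := by
    have h1 := congrArg (fun v => -(D.actV D.w0 v)) hδα₀
    simp only [map_neg, neg_neg, map_smul] at h1
    rw [D.actV_w0_w0] at h1
    rw [h1, hγ'def, smul_neg]
  rw [key, smul_smul, inv_mul_cancel₀ hd₀pos.ne', one_smul]

section Parab

variable (PiM : Finset D.V) (w0dM : D.W)

lemma delta_mem_iff {ν : D.V} :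
    ν ∈ D.deltaSimples PiM ↔ ∃ γ ∈ PiM, -(D.actV D.w0 γ) = ν := by
  unfold deltaSimples
  rw [Finset.mem_image]

lemma delta_pos (hPiM : PiM ⊆ D.simples) {ν : D.V} (hν : ν ∈ D.deltaSimples PiM) :
    ν ∈ D.posRoots := by
  obtain ⟨γ, hγ, rfl⟩ := (D.delta_mem_iff PiM).mp hν
  exact D.w0_neg γ (D.simples_subset (hPiM hγ))

lemma delta_root (hPiM : PiM ⊆ D.simples) {ν : D.V} (hν : ν ∈ D.deltaSimples PiM) :
    ν ∈ D.roots := D.pos_roots (D.delta_pos PiM hPiM hν)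

lemma delta_span (hPiM : PiM ⊆ D.simples) {ν : D.V} (hν : ν ∈ D.deltaSimples PiM) :
    ∃ α ∈ D.simples, (D.s ν = D.s α ∧
      α ∈ Submodule.span ℝ ((D.deltaSimples PiM : Finset D.V) : Set D.V)) := by
  obtain ⟨γ, hγ, rfl⟩ := (D.delta_mem_iff PiM).mp hν
  obtain ⟨α, hα, cc, hcc, heq⟩ := D.minusw0_simple (hPiM hγ)
  refine ⟨α, hα, ?_, ?_⟩
  · exact D.s_proportional (D.simples_roots hα) (D.delta_root PiM hPiM hν) hcc.ne' heq
  · have hmem : -(D.actV D.w0 γ) ∈ Submodule.span ℝ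
        ((D.deltaSimples PiM : Finset D.V) : Set D.V) :=
      Submodule.subset_span (by exact_mod_cast hν)
    rw [heq] at hmem
    have := Submodule.smul_mem _ cc⁻¹ hmem
    rwa [smul_smul, inv_mul_cancel₀ hcc.ne', one_smul] at this

lemma s_delta_preserve (hPiM : PiM ⊆ D.simples) {ν : D.V} (hν : ν ∈ D.deltaSimples PiM)
    {γ : D.V} (hγ : γ ∈ D.posRoots)
    (hγs : γ ∉ Submodule.span ℝ ((D.deltaSimples PiM : Finset D.V) : Set D.V)) :
    D.actV (D.s ν) γ ∈ D.posRoots ∧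
      D.actV (D.s ν) γ ∉ Submodule.span ℝ ((D.deltaSimples PiM : Finset D.V) : Set D.V) := by
  obtain ⟨α, hα, hsν, hαspan⟩ := D.delta_span PiM hPiM hν
  have hαr := D.simples_roots hα
  have hγα : γ ∉ (Submodule.span ℝ {α} : Submodule ℝ D.V) := by
    intro habs
    apply hγs
    have : (Submodule.span ℝ {α} : Submodule ℝ D.V)
        ≤ Submodule.span ℝ ((D.deltaSimples PiM : Finset D.V) : Set D.V) := by
      rw [Submodule.span_le, Set.singleton_subset_iff]
      exact hαspan
    exact this habs
  constructor
  · rw [hsν]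
    exact D.simple_reflection_pos hα hγ hγα
  · rw [hsν, D.actV_s α hαr]
    intro habs
    apply hγs
    have := Submodule.add_mem _ habs
      (Submodule.smul_mem _ (D.pairR γ (D.cv α)) hαspan)
    rwa [sub_add_cancel] at this

lemma WN_preserve : ∀ m ∈ D.WM (D.deltaSimples PiM), (PiM ⊆ D.simples) → ∀ γ ∈ D.posRoots,
    γ ∉ Submodule.span ℝ ((D.deltaSimples PiM : Finset D.V) : Set D.V) →
    (D.actV m γ ∈ D.posRoots ∧
      D.actV m γ ∉ Submodule.span ℝ ((D.deltaSimples PiM : Finset D.V) : Set D.V)) := by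
  intro m hm
  induction hm using Subgroup.closure_induction with
  | mem x hx =>
    intro hPiM γ hγ hγs
    obtain ⟨ν, hν, rfl⟩ := hx
    exact D.s_delta_preserve PiM hPiM (by exact_mod_cast hν) hγ hγs
  | one =>
    intro hPiM γ hγ hγs
    rw [D.actV_one_apply]
    exact ⟨hγ, hγs⟩
  | mul x y hx hy hPx hPy =>
    intro hPiM γ hγ hγs
    rw [D.actV_apply_mul]
    obtain ⟨h1, h2⟩ := hPy hPiM γ hγ hγs
    exact hPx hPiM _ h1 h2
  | inv x hx hPx =>
    intro hPiM γ hγ hγs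
    set F := D.posRoots.filter
      (fun δ => δ ∉ Submodule.span ℝ ((D.deltaSimples PiM : Finset D.V) : Set D.V)) with hF
    have hmemF : γ ∈ F := Finset.mem_filter.mpr ⟨hγ, hγs⟩
    have himg : ∀ a ∈ F, D.actV x a ∈ F := by
      intro a ha
      obtain ⟨h1, h2⟩ := Finset.mem_filter.mp ha
      obtain ⟨h3, h4⟩ := hPx hPiM a h1 h2
      exact Finset.mem_filter.mpr ⟨h3, h4⟩
    have hsurj := Finset.surj_on_of_inj_on_of_card_le (s := F) (t := F)
      (fun a _ => D.actV x a) (fun a ha => himg a ha)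
      (fun a₁ a₂ _ _ h => (D.actV x).injective h) le_rfl
    obtain ⟨a, ha, hax⟩ := hsurj γ hmemF
    have : D.actV x⁻¹ γ = a := by rw [hax, D.actV_inv_apply2]
    rw [this]
    exact ⟨(Finset.mem_filter.mp ha).1, (Finset.mem_filter.mp ha).2⟩

lemma x0_minrep (hPiM : PiM ⊆ D.simples)
    (hw0dM : D.IsLongest (D.deltaSimples PiM) w0dM) :
    D.IsMinRep (D.deltaSimples PiM) (D.w0 * w0dM) := by
  intro γ hγ
  rw [D.actV_apply_mul]
  have h1 := hw0dM.2 γ hγ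
  have hμneg : -(D.actV w0dM γ) ∈ D.posRoots := h1.1
  have hμr : D.actV w0dM γ ∈ D.roots := D.actV_roots _ _ (D.pos_roots hγ.1)
  exact D.w0_pos_of_not_pos hμr (D.not_pos_of_neg_pos hμneg)

lemma s_neg_eq {γ : D.V} (hγ : γ ∈ D.roots) : D.s (-γ) = D.s γ :=
  D.s_proportional hγ (D.neg_root hγ) (by norm_num : (-1 : ℝ) ≠ 0) (by module)

lemma w0_conj_WM (hPiM : PiM ⊆ D.simples) :
    ∀ z ∈ D.WM PiM, D.w0 * z * D.w0 ∈ D.WM (D.deltaSimples PiM) := by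
  intro z hz
  induction hz using Subgroup.closure_induction with
  | mem x hx =>
    obtain ⟨γ, hγ, rfl⟩ := hx
    have hγM : γ ∈ PiM := by exact_mod_cast hγ
    have hγr : γ ∈ D.roots := D.simples_roots (hPiM hγM)
    have hν : -(D.actV D.w0 γ) ∈ D.deltaSimples PiM :=
      (D.delta_mem_iff PiM).mpr ⟨γ, hγM, rfl⟩
    have hconj : D.w0 * D.s γ * D.w0 = D.s (D.actV D.w0 γ) := by
      rw [← D.conj_s hγr D.w0, D.w0_inv]
    rw [hconj, show D.actV D.w0 γ = -(-(D.actV D.w0 γ)) by rw [neg_neg],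
      D.s_neg_eq (D.delta_root PiM hPiM hν)]
    exact Subgroup.subset_closure ⟨_, by exact_mod_cast hν, rfl⟩
  | one =>
    rw [mul_one, D.w0_sq]
    exact Subgroup.one_mem _
  | mul x y hx hy hPx hPy =>
    have : D.w0 * (x * y) * D.w0 = (D.w0 * x * D.w0) * (D.w0 * y * D.w0) := by
      have h1 : (D.w0 * x * D.w0) * (D.w0 * y * D.w0)
          = D.w0 * x * (D.w0 * D.w0) * y * D.w0 := by group
      rw [h1, D.w0_sq, mul_one]
      group
    rw [this]
    exact Subgroup.mul_mem _ hPx hPy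
  | inv x hx hPx =>
    have : D.w0 * x⁻¹ * D.w0 = (D.w0 * x * D.w0)⁻¹ := by
      rw [mul_inv_rev, mul_inv_rev, D.w0_inv]
      group
    rw [this]
    exact Subgroup.inv_mem _ hPx

lemma w0_conj_WN (hPiM : PiM ⊆ D.simples) :
    ∀ n ∈ D.WM (D.deltaSimples PiM), D.w0 * n * D.w0 ∈ D.WM PiM := by
  intro n hn
  induction hn using Subgroup.closure_induction with
  | mem x hx =>
    obtain ⟨ν, hν, rfl⟩ := hx
    have hνN : ν ∈ D.deltaSimples PiM := by exact_mod_cast hν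
    obtain ⟨γ, hγM, hγν⟩ := (D.delta_mem_iff PiM).mp hνN
    have hνr : ν ∈ D.roots := D.delta_root PiM hPiM hνN
    have hconj : D.w0 * D.s ν * D.w0 = D.s (D.actV D.w0 ν) := by
      rw [← D.conj_s hνr D.w0, D.w0_inv]
    have hw0ν : D.actV D.w0 ν = -γ := by
      rw [← hγν, map_neg, D.actV_w0_w0]
    rw [hconj, hw0ν, D.s_neg_eq (D.simples_roots (hPiM hγM))]
    exact Subgroup.subset_closure ⟨γ, by exact_mod_cast hγM, rfl⟩
  | one =>
    rw [mul_one, D.w0_sq]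
    exact Subgroup.one_mem _
  | mul x y hx hy hPx hPy =>
    have : D.w0 * (x * y) * D.w0 = (D.w0 * x * D.w0) * (D.w0 * y * D.w0) := by
      have h1 : (D.w0 * x * D.w0) * (D.w0 * y * D.w0)
          = D.w0 * x * (D.w0 * D.w0) * y * D.w0 := by group
      rw [h1, D.w0_sq, mul_one]
      group
    rw [this]
    exact Subgroup.mul_mem _ hPx hPy
  | inv x hx hPx =>
    have : D.w0 * x⁻¹ * D.w0 = (D.w0 * x * D.w0)⁻¹ := by
      rw [mul_inv_rev, mul_inv_rev, D.w0_inv]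
      group
    rw [this]
    exact Subgroup.inv_mem _ hPx

lemma conj_WM_WN (hPiM : PiM ⊆ D.simples)
    (hw0dM : D.IsLongest (D.deltaSimples PiM) w0dM) {z : D.W} (hz : z ∈ D.WM PiM) :
    (D.w0 * w0dM)⁻¹ * z * (D.w0 * w0dM) ∈ D.WM (D.deltaSimples PiM) := by
  have heq : (D.w0 * w0dM)⁻¹ * z * (D.w0 * w0dM)
      = w0dM⁻¹ * (D.w0 * z * D.w0) * w0dM := by
    rw [mul_inv_rev, D.w0_inv]
    group
  rw [heq]
  exact Subgroup.mul_mem _ (Subgroup.mul_mem _ (Subgroup.inv_mem _ hw0dM.1)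
    (D.w0_conj_WM PiM hPiM z hz)) hw0dM.1

lemma conj_WN_WM (hPiM : PiM ⊆ D.simples)
    (hw0dM : D.IsLongest (D.deltaSimples PiM) w0dM) {m : D.W}
    (hm : m ∈ D.WM (D.deltaSimples PiM)) :
    (D.w0 * w0dM) * m * (D.w0 * w0dM)⁻¹ ∈ D.WM PiM := by
  have heq : (D.w0 * w0dM) * m * (D.w0 * w0dM)⁻¹
      = D.w0 * (w0dM * m * w0dM⁻¹) * D.w0 := by
    rw [mul_inv_rev, D.w0_inv]
    group
  rw [heq]
  exact D.w0_conj_WN PiM hPiM _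
    (Subgroup.mul_mem _ (Subgroup.mul_mem _ hw0dM.1 hm) (Subgroup.inv_mem _ hw0dM.1))

/-- the key vanishing lemma: reflections never land in the coset of the
longest representative -/
lemma keyL (hPiM : PiM ⊆ D.simples)
    (hw0dM : D.IsLongest (D.deltaSimples PiM) w0dM)
    {x : D.W} (hx : D.IsMinRep (D.deltaSimples PiM) x) {β : D.V}
    (hβ : β ∈ D.posRoots) (hneg : D.actV x⁻¹ β ∉ D.posRoots)
    {m : D.W} (hm : m ∈ D.WM (D.deltaSimples PiM)) :
    D.s β * x ≠ (D.w0 * w0dM) * m := by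
  intro heq
  have h1 : D.len (D.s β * x) < D.len x := D.len_s_mul_lt hβ hneg
  set Shat : Finset (Submodule ℝ D.V) := (D.posRoots.filter
    (fun γ => γ ∉ Submodule.span ℝ ((D.deltaSimples PiM : Finset D.V) : Set D.V))).image
    (fun γ => Submodule.span ℝ {γ}) with hShat
  have h2 : D.Nhat x ⊆ Shat := by
    intro L hL
    obtain ⟨γ, hγ, hγneg, hspan⟩ := D.mem_Nhat.mp hL
    have hγs : γ ∉ Submodule.span ℝ ((D.deltaSimples PiM : Finset D.V) : Set D.V) := by
      intro habs
      exact hγneg (hx γ ⟨hγ, habs⟩)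
    exact Finset.mem_image.mpr ⟨γ, Finset.mem_filter.mpr ⟨hγ, hγs⟩, hspan⟩
  have h3 : Shat ⊆ D.Nhat ((D.w0 * w0dM) * m) := by
    intro L hL
    obtain ⟨γ, hγf, hspan⟩ := Finset.mem_image.mp hL
    obtain ⟨hγ, hγs⟩ := Finset.mem_filter.mp hγf
    apply D.mem_Nhat.mpr
    refine ⟨γ, hγ, ?_, hspan⟩
    obtain ⟨hm1, hm2⟩ := D.WN_preserve PiM m hm hPiM γ hγ hγs
    obtain ⟨hd1, hd2⟩ := D.WN_preserve PiM w0dM hw0dM.1 hPiM _ hm1 hm2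
    rw [D.actV_apply_mul, D.actV_apply_mul]
    exact D.w0_not_pos hd1
  have h4 : D.len x ≤ (D.Nhat x).card := D.len_le_card x
  have h5 : (D.Nhat ((D.w0 * w0dM) * m)).card ≤ D.len ((D.w0 * w0dM) * m) :=
    D.card_le_len _
  have h6 := Finset.card_le_card h2
  have h7 := Finset.card_le_card h3
  rw [heq] at h1
  omega

end Parab

/-! ### Stage 4a: coset combinatorics -/

section Coset

variable {P : Finset D.V} (cd : CosetData D P)

lemma cd_of_min_mul {x m : D.W} (hx : D.IsMinRep P x) (hm : m ∈ D.WM P) :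
    cd.c (x * m) = x ∧ cd.m (x * m) = m := by
  obtain ⟨h1, h2⟩ := cd.uniq (x * m) x m hx hm rfl
  exact ⟨h1.symm, h2.symm⟩

lemma minrep_unique (cd : D.CosetData P) {x j m : D.W} (hx : D.IsMinRep P x)
    (hj : D.IsMinRep P j) (hm : m ∈ D.WM P) (h : x = j * m) : x = j := by
  have h1 : cd.c (j * m) = j := (D.cd_of_min_mul cd hj hm).1
  have h2 : cd.c (x * 1) = x := (D.cd_of_min_mul cd hx (Subgroup.one_mem _)).1
  rw [mul_one] at h2
  rw [← h2, h, h1]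

lemma cd_c_eq_iff {z j x' : D.W} (hj : D.IsMinRep P j) (hx' : D.IsMinRep P x')
    (h : cd.c (z * x') = j) : x' = cd.c (z⁻¹ * j) := by
  have hfact := cd.factor (z * x')
  rw [h] at hfact
  set m2 := cd.m (z * x') with hm2
  have key : z⁻¹ * j = x' * m2⁻¹ := by
    rw [show j = z * x' * m2⁻¹ from by rw [hfact]; group]
    group
  obtain ⟨h1, _⟩ := cd.uniq (z⁻¹ * j) x' m2⁻¹ hx'
    (Subgroup.inv_mem _ (cd.m_mem _)) key
  exact h1

lemma cd_c_of_min (z : D.W) {j : D.W} (hj : D.IsMinRep P j) :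
    cd.c (z * cd.c (z⁻¹ * j)) = j ∧ cd.m (z * cd.c (z⁻¹ * j)) = (cd.m (z⁻¹ * j))⁻¹ := by
  set xs := cd.c (z⁻¹ * j) with hxs
  set ms := cd.m (z⁻¹ * j) with hms
  have hfact : z⁻¹ * j = xs * ms := cd.factor _
  have heq : z * xs = j * ms⁻¹ := by
    rw [show xs = z⁻¹ * j * ms⁻¹ from by rw [hfact]; group]
    group
  rw [heq]
  exact D.cd_of_min_mul cd hj (Subgroup.inv_mem _ (cd.m_mem _))

end Coset

/-! ### Stage 4b: the spanning lemma for H -/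

section SpanH

variable (P : Finset D.V)

lemma theta_mem_HM (ω : D.VC) : D.θ ω ∈ D.HM P :=
  Algebra.subset_adjoin (Or.inl ⟨ω, rfl⟩)

lemma t_mem_HM {g : D.W} (hg : g ∈ D.WM P) : D.t g ∈ D.HM P :=
  Algebra.subset_adjoin (Or.inr ⟨g, hg, rfl⟩)

/-- the span of elements a * t_z with a ∈ H_M -/
noncomputable def TT : Submodule ℂ D.H :=
  Submodule.span ℂ {h : D.H | ∃ a ∈ D.HM P, ∃ z : D.W, h = a * D.t z}

lemma HM_mul_TT {a h : D.H} (ha : a ∈ D.HM P) (hh : h ∈ D.TT P) : a * h ∈ D.TT P := by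
  induction hh using Submodule.span_induction with
  | mem x hx =>
    obtain ⟨a', ha', z, rfl⟩ := hx
    exact Submodule.subset_span ⟨a * a', Subalgebra.mul_mem _ ha ha', z, (mul_assoc a a' _).symm⟩
  | zero => rw [mul_zero]; exact Submodule.zero_mem _
  | add x y hx hy hPx hPy => rw [mul_add]; exact Submodule.add_mem _ hPx hPy
  | smul r x hx hPx => rw [mul_smul_comm]; exact Submodule.smul_mem _ _ hPx

lemma TT_mul_t {h : D.H} (hh : h ∈ D.TT P) (z : D.W) : h * D.t z ∈ D.TT P := by
  induction hh using Submodule.span_induction with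
  | mem x hx =>
    obtain ⟨a, ha, z', rfl⟩ := hx
    refine Submodule.subset_span ⟨a, ha, z' * z, ?_⟩
    rw [mul_assoc, D.t_mul]
  | zero => rw [zero_mul]; exact Submodule.zero_mem _
  | add x y hx hy hPx hPy => rw [add_mul]; exact Submodule.add_mem _ hPx hPy
  | smul r x hx hPx => rw [smul_mul_assoc]; exact Submodule.smul_mem _ _ hPx

lemma mem_TT_of_HM {a : D.H} (ha : a ∈ D.HM P) : a ∈ D.TT P := by
  have : a = a * D.t 1 := by rw [D.t_one, mul_one]
  rw [this]
  exact Submodule.subset_span ⟨a, ha, 1, rfl⟩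

lemma t_mem_TT (z : D.W) : D.t z ∈ D.TT P := by
  have : D.t z = 1 * D.t z := (one_mul _).symm
  rw [this]
  exact Submodule.subset_span ⟨1, Subalgebra.one_mem _, z, rfl⟩

lemma t_s_theta (α : D.V) (hα : α ∈ D.simples) (ω : D.VC) :
    D.t (D.s α) * D.θ ω = D.θ (D.actVC (D.s α) ω) * D.t (D.s α)
      - algebraMap ℂ D.H ((D.kpar α : ℂ) * D.pairC (D.actVC (D.s α) ω) (D.iVd (D.cv α))) := by
  have hcr := D.cross_rel α hα (D.actVC (D.s α) ω)
  have hss : D.actVC (D.s α) (D.actVC (D.s α) ω) = ω := by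
    rw [show D.actVC (D.s α) ((D.actVC (D.s α)) ω) = D.actVC (D.s α * D.s α) ω from by
      rw [map_mul]; rfl]
    rw [D.s_invol (D.simples_roots hα), map_one]
    rfl
  rw [hss] at hcr
  rw [hcr, add_sub_cancel_right]

lemma t_word_theta_mem_TT (l : List D.V) (hl : ∀ α ∈ l, α ∈ D.simples) :
    ∀ ω : D.VC, D.t ((l.map D.s).prod) * D.θ ω ∈ D.TT P := by
  induction l using List.reverseRecOn with
  | nil =>
    intro ω
    simp only [List.map_nil, List.prod_nil, D.t_one, one_mul]
    exact D.mem_TT_of_HM P (D.theta_mem_HM P ω)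
  | append_singleton l α ih =>
    intro ω
    have hα : α ∈ D.simples := hl α (by simp)
    have hml : ∀ β ∈ l, β ∈ D.simples := fun β hβ => hl β (by simp [hβ])
    have hprod : (((l ++ [α]).map D.s).prod) = (l.map D.s).prod * D.s α := by
      rw [List.map_append, List.prod_append]
      simp
    rw [hprod, ← D.t_mul, mul_assoc, D.t_s_theta α hα ω]
    rw [mul_sub]
    apply Submodule.sub_mem
    · rw [← mul_assoc]
      exact D.TT_mul_t P (ih hml _) _
    · rw [← Algebra.commutes, ← Algebra.smul_def]
      exact Submodule.smul_mem _ _ (D.t_mem_TT P _)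

lemma TT_mul_of {y : D.H} (hy : ∀ z : D.W, D.t z * y ∈ D.TT P) :
    ∀ {h : D.H}, h ∈ D.TT P → h * y ∈ D.TT P := by
  intro h hh
  induction hh using Submodule.span_induction with
  | mem u hu =>
    obtain ⟨a', ha', z', rfl⟩ := hu
    rw [mul_assoc]
    exact D.HM_mul_TT P ha' (hy z')
  | zero => rw [zero_mul]; exact Submodule.zero_mem _
  | add u v hu hv hPu hPv => rw [add_mul]; exact Submodule.add_mem _ hPu hPv
  | smul r u hu hPu => rw [smul_mul_assoc]; exact Submodule.smul_mem _ _ hPu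

lemma t_mul_HM_mem_TT : ∀ a ∈ D.HM P, ∀ z : D.W, D.t z * a ∈ D.TT P := by
  intro a ha
  induction ha using Algebra.adjoin_induction with
  | mem x hx =>
    intro z
    rcases hx with ⟨ω, rfl⟩ | ⟨g, hg, rfl⟩
    · obtain ⟨n, l, hl, _⟩ := D.exists_word z
      rw [← hl.2]
      exact D.t_word_theta_mem_TT P l hl.1 ω
    · rw [D.t_mul]
      exact D.t_mem_TT P _
  | algebraMap r =>
    intro z
    rw [← Algebra.commutes, ← Algebra.smul_def]
    exact Submodule.smul_mem _ _ (D.t_mem_TT P _)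
  | add x y hx hy hPx hPy =>
    intro z
    rw [mul_add]
    exact Submodule.add_mem _ (hPx z) (hPy z)
  | mul x y hx hy hPx hPy =>
    intro z
    rw [← mul_assoc]
    exact D.TT_mul_of P (fun z' => hPy z') (hPx z)

lemma TT_eq_top : D.TT P = ⊤ := by
  rw [Submodule.eq_top_iff']
  intro h
  obtain ⟨cw, hcw⟩ := D.pbw_span h
  rw [hcw]
  apply Submodule.sum_mem
  intro w _
  have hmem : ((cw w : D.H)) ∈ D.HM P := by
    have := (cw w).2
    exact Algebra.adjoin_mono Set.subset_union_left this
  exact D.t_mul_HM_mem_TT P _ hmem w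

end SpanH

/-! ### Stage 5: the induced-module computations -/

lemma actVC_inv_apply (g : D.W) (ω : D.VC) : D.actVC g (D.actVC g⁻¹ ω) = ω := by
  rw [show D.actVC g ((D.actVC g⁻¹) ω) = D.actVC (g * g⁻¹) ω from by rw [map_mul]; rfl,
    mul_inv_cancel, map_one]
  rfl

section Main

variable (PiM : Finset D.V) (hPiM : PiM ⊆ D.simples) (w0dM : D.W)
  (hw0dM : D.IsLongest (D.deltaSimples PiM) w0dM)
  (cdD : D.CosetData (D.deltaSimples PiM))
  {U' : Type} [AddCommGroup U'] [Module ℂ U']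
  (σ' : D.HM PiM →ₐ[ℂ] Module.End ℂ U')
  (aσ : D.HM (D.deltaSimples PiM) →ₐ[ℂ] Module.End ℂ U')
  (πI' : D.H →ₐ[ℂ] Module.End ℂ (D.JM (D.deltaSimples PiM) → U'))

noncomputable local instance : Fintype (D.JM (D.deltaSimples PiM)) := Fintype.ofFinite _

/-- the distinguished coset representative x₀ = w₀ w_{0,δ(M)} as element of J -/
noncomputable def x0el : D.JM (D.deltaSimples PiM) :=
  ⟨D.w0 * w0dM, D.x0_minrep PiM w0dM hPiM hw0dM⟩

lemma apply_decomp (T : Module.End ℂ (D.JM (D.deltaSimples PiM) → U'))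
    (y : D.JM (D.deltaSimples PiM) → U') (e : D.JM (D.deltaSimples PiM)) :
    (T y) e = ∑ x', (T (Pi.single x' (y x'))) e := by
  conv_lhs => rw [← Finset.univ_sum_single y]
  rw [map_sum, Finset.sum_apply]

lemma piI_t_back (hπI' : D.IsInducedAction (D.deltaSimples PiM) cdD aσ πI')
    (j : D.JM (D.deltaSimples PiM)) (y : D.JM (D.deltaSimples PiM) → U') :
    (πI' (D.t ((D.w0 * w0dM) * j.1⁻¹)) y) (D.x0el PiM hPiM w0dM hw0dM) = y j := by
  set x0e := D.x0el PiM hPiM w0dM hw0dM with hx0e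
  rw [D.apply_decomp PiM _ y x0e]
  rw [Finset.sum_eq_single j ?side ?notmem]
  case notmem => intro h; exact absurd (Finset.mem_univ j) h
  case side =>
    intro x' _ hne
    rw [hπI'.1]
    apply Pi.single_eq_of_ne
    intro habs
    apply hne
    have hceq : cdD.c ((D.w0 * w0dM) * j.1⁻¹ * x'.1) = D.w0 * w0dM :=
      (congrArg Subtype.val habs).symm
    have hfact := cdD.factor ((D.w0 * w0dM) * j.1⁻¹ * x'.1)
    rw [hceq] at hfact
    have hx'j : x'.1 = j.1 * cdD.m ((D.w0 * w0dM) * j.1⁻¹ * x'.1) := by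
      have h2 : ((D.w0 * w0dM) * j.1⁻¹) * x'.1
          = ((D.w0 * w0dM) * j.1⁻¹) * (j.1 * cdD.m ((D.w0 * w0dM) * j.1⁻¹ * x'.1)) := by
        rw [← mul_assoc]
        rw [show (D.w0 * w0dM) * j.1⁻¹ * j.1 = D.w0 * w0dM from by group]
        rw [← hfact]
      exact mul_left_cancel h2
    exact Subtype.ext (D.minrep_unique cdD x'.2 j.2 (cdD.m_mem _) hx'j)
  · -- main term
    rw [hπI'.1 ((D.w0 * w0dM) * j.1⁻¹) j (y j)]
    have hz : (D.w0 * w0dM) * j.1⁻¹ * j.1 = (D.w0 * w0dM) * 1 := by group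
    have hc := D.cd_of_min_mul cdD (D.x0_minrep PiM w0dM hPiM hw0dM)
      (Subgroup.one_mem (D.WM (D.deltaSimples PiM)))
    have hceq : cdD.c ((D.w0 * w0dM) * j.1⁻¹ * j.1) = D.w0 * w0dM := by rw [hz]; exact hc.1
    have hmeq : cdD.m ((D.w0 * w0dM) * j.1⁻¹ * j.1) = 1 := by rw [hz]; exact hc.2
    have hidx : (⟨cdD.c ((D.w0 * w0dM) * j.1⁻¹ * j.1), cdD.c_min _⟩
        : D.JM (D.deltaSimples PiM)) = x0e := Subtype.ext hceq
    rw [hidx]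
    have htM : (D.tM (D.deltaSimples PiM) (cdD.m ((D.w0 * w0dM) * j.1⁻¹ * j.1))
        (cdD.m_mem _)) = 1 := by
      apply Subtype.ext
      show D.t _ = _
      rw [hmeq, D.t_one]
      rfl
    rw [htM, map_one, Pi.single_eq_same]
    rfl

lemma sigma_mk_alg (r : ℂ) (pf : (algebraMap ℂ D.H) r ∈ D.HM PiM) :
    σ' ⟨(algebraMap ℂ D.H) r, pf⟩ = algebraMap ℂ (Module.End ℂ U') r := by
  rw [show (⟨(algebraMap ℂ D.H) r, pf⟩ : D.HM PiM) = algebraMap ℂ (D.HM PiM) r from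
    Subtype.ext rfl]
  exact σ'.commutes r

/-- evaluation at x₀ intertwines the H_M-actions -/
lemma E1 (hπI' : D.IsInducedAction (D.deltaSimples PiM) cdD aσ πI')
    (haσt : ∀ (m' : D.W) (hm' : m' ∈ D.WM (D.deltaSimples PiM))
      (hm'' : (D.w0 * w0dM) * m' * (D.w0 * w0dM)⁻¹ ∈ D.WM PiM),
      aσ (D.tM (D.deltaSimples PiM) m' hm') = σ' (D.tM PiM _ hm''))
    (haσθ : ∀ ω : D.VC,
      aσ (D.θM (D.deltaSimples PiM) ω) = σ' (D.θM PiM (D.actVC (D.w0 * w0dM) ω)))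
    {h : D.H} (hh : h ∈ D.HM PiM) :
    ∀ y : D.JM (D.deltaSimples PiM) → U',
      (πI' h y) (D.x0el PiM hPiM w0dM hw0dM)
        = σ' ⟨h, hh⟩ (y (D.x0el PiM hPiM w0dM hw0dM)) := by
  set x0e := D.x0el PiM hPiM w0dM hw0dM with hx0e
  induction hh using Algebra.adjoin_induction with
  | mem u hu =>
    rcases hu with ⟨ω, rfl⟩ | ⟨g, hg, rfl⟩
    · -- θ ω case
      intro y
      rw [D.apply_decomp PiM _ y x0e]
      have hterm : ∀ x' : D.JM (D.deltaSimples PiM),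
          (πI' (D.θ ω) (Pi.single x' (y x'))) x0e
          = (Pi.single x' (aσ (D.θM (D.deltaSimples PiM) (D.actVC x'.1⁻¹ ω)) (y x'))
              : D.JM (D.deltaSimples PiM) → U') x0e := by
        intro x'
        rw [hπI'.2 ω x' (y x')]
        rw [Pi.add_apply]
        have hzero : (∑ β ∈ D.posRoots.filter
            (fun β => -(D.actV x'.1⁻¹ β) ∈ D.posRoots),
            ((D.kpar β : ℂ) * D.pairC ω (D.iVd (D.cv β))) •
              (Pi.single (⟨cdD.c (D.s β * x'.1), cdD.c_min _⟩ : D.JM (D.deltaSimples PiM))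
                (aσ (D.tM (D.deltaSimples PiM) (cdD.m (D.s β * x'.1)) (cdD.m_mem _)) (y x'))
                : D.JM (D.deltaSimples PiM) → U')) x0e = 0 := by
          rw [Finset.sum_apply]
          apply Finset.sum_eq_zero
          intro β hβ
          obtain ⟨hβpos, hβneg⟩ := Finset.mem_filter.mp hβ
          rw [Pi.smul_apply, Pi.single_eq_of_ne, smul_zero]
          intro habs
          have hceq : cdD.c (D.s β * x'.1) = D.w0 * w0dM :=
            (congrArg Subtype.val habs).symm
          apply D.keyL PiM w0dM hPiM hw0dM x'.2 hβpos
            (D.not_pos_of_neg_pos hβneg) (cdD.m_mem (D.s β * x'.1))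
          calc D.s β * x'.1 = cdD.c (D.s β * x'.1) * cdD.m (D.s β * x'.1) := cdD.factor _
            _ = (D.w0 * w0dM) * cdD.m (D.s β * x'.1) := by rw [hceq]
        rw [hzero, add_zero]
      rw [Finset.sum_congr rfl (fun x' _ => hterm x')]
      rw [← Finset.sum_apply, Finset.univ_sum_single
        (fun x' : D.JM (D.deltaSimples PiM) =>
          aσ (D.θM (D.deltaSimples PiM) (D.actVC x'.1⁻¹ ω)) (y x'))]
      beta_reduce
      rw [haσθ]
      have hact : D.actVC (D.w0 * w0dM) (D.actVC (x0e.1)⁻¹ ω) = ω := D.actVC_inv_apply _ ω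
      rw [hact]
      rfl
    · -- t g case
      intro y
      rw [D.apply_decomp PiM _ y x0e]
      rw [Finset.sum_eq_single x0e ?side ?notmem]
      case notmem => intro habs; exact absurd (Finset.mem_univ x0e) habs
      case side =>
        intro x' _ hne
        rw [hπI'.1]
        apply Pi.single_eq_of_ne
        intro habs
        apply hne
        have hceq : cdD.c (g * x'.1) = D.w0 * w0dM := (congrArg Subtype.val habs).symm
        have hfact := cdD.factor (g * x'.1)
        rw [hceq] at hfact
        set m2 := cdD.m (g * x'.1) with hm2
        have hx' : x'.1 = (D.w0 * w0dM) *
            (((D.w0 * w0dM)⁻¹ * g⁻¹ * (D.w0 * w0dM)) * m2) := by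
          have h2 : g * x'.1 = g * ((D.w0 * w0dM) *
              (((D.w0 * w0dM)⁻¹ * g⁻¹ * (D.w0 * w0dM)) * m2)) := by
            rw [hfact]; group
          exact mul_left_cancel h2
        have hmem2 : ((D.w0 * w0dM)⁻¹ * g⁻¹ * (D.w0 * w0dM)) * m2
            ∈ D.WM (D.deltaSimples PiM) :=
          Subgroup.mul_mem _ (D.conj_WM_WN PiM w0dM hPiM hw0dM (Subgroup.inv_mem _ hg))
            (cdD.m_mem _)
        exact Subtype.ext (D.minrep_unique cdD x'.2
          (D.x0_minrep PiM w0dM hPiM hw0dM) hmem2 hx')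
      · -- main term at x0e
        rw [hπI'.1 g x0e (y x0e)]
        have hgmem : (D.w0 * w0dM)⁻¹ * g * (D.w0 * w0dM) ∈ D.WM (D.deltaSimples PiM) :=
          D.conj_WM_WN PiM w0dM hPiM hw0dM hg
        have hz : g * x0e.1 = (D.w0 * w0dM) * ((D.w0 * w0dM)⁻¹ * g * (D.w0 * w0dM)) := by
          show g * (D.w0 * w0dM) = _
          group
        have hc := D.cd_of_min_mul cdD (D.x0_minrep PiM w0dM hPiM hw0dM) hgmem
        have hceq : cdD.c (g * x0e.1) = D.w0 * w0dM := by rw [hz]; exact hc.1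
        have hmeq : cdD.m (g * x0e.1) = (D.w0 * w0dM)⁻¹ * g * (D.w0 * w0dM) := by
          rw [hz]; exact hc.2
        have hidx : (⟨cdD.c (g * x0e.1), cdD.c_min _⟩
            : D.JM (D.deltaSimples PiM)) = x0e := Subtype.ext hceq
        rw [hidx, Pi.single_eq_same]
        have htM : (D.tM (D.deltaSimples PiM) (cdD.m (g * x0e.1)) (cdD.m_mem _))
            = D.tM (D.deltaSimples PiM) ((D.w0 * w0dM)⁻¹ * g * (D.w0 * w0dM)) hgmem := by
          apply Subtype.ext
          show D.t _ = D.t _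
          rw [hmeq]
        rw [htM]
        have hgrp : (D.w0 * w0dM) * ((D.w0 * w0dM)⁻¹ * g * (D.w0 * w0dM))
            * (D.w0 * w0dM)⁻¹ = g := by group
        have hgmem'' : (D.w0 * w0dM) * ((D.w0 * w0dM)⁻¹ * g * (D.w0 * w0dM))
            * (D.w0 * w0dM)⁻¹ ∈ D.WM PiM := by rw [hgrp]; exact hg
        rw [haσt _ hgmem hgmem'']
        have htM2 : D.tM PiM ((D.w0 * w0dM) * ((D.w0 * w0dM)⁻¹ * g * (D.w0 * w0dM))
            * (D.w0 * w0dM)⁻¹) hgmem'' = ⟨D.t g, Algebra.subset_adjoin (Or.inr ⟨g, hg, rfl⟩)⟩ := by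
          apply Subtype.ext
          show D.t _ = D.t g
          rw [hgrp]
        rw [htM2]
  | algebraMap r =>
    intro y
    rw [πI'.commutes r]
    show _ = σ' (algebraMap ℂ (D.HM PiM) r) (y x0e)
    rw [σ'.commutes r]
    rw [Module.algebraMap_end_apply, Module.algebraMap_end_apply, Pi.smul_apply]
  | add u v hu hv hPu hPv =>
    intro y
    rw [map_add, LinearMap.add_apply, Pi.add_apply, hPu y, hPv y]
    have : (⟨u + v, add_mem hu hv⟩ : D.HM PiM) = ⟨u, hu⟩ + ⟨v, hv⟩ := rfl
    rw [this, map_add, LinearMap.add_apply]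
  | mul u v hu hv hPu hPv =>
    intro y
    rw [map_mul, Module.End.mul_apply, hPu _, hPv y]
    have : (⟨u * v, mul_mem hu hv⟩ : D.HM PiM) = ⟨u, hu⟩ * ⟨v, hv⟩ := rfl
    rw [this, map_mul, Module.End.mul_apply]

/-- the value of πI'(t_z) on the candidate image of Ψ -/
lemma Psi_t_equiv (hPiM' : PiM ⊆ D.simples)
    (hw0dM' : D.IsLongest (D.deltaSimples PiM) w0dM)
    (hπI' : D.IsInducedAction (D.deltaSimples PiM) cdD aσ πI')
    (haσt : ∀ (m' : D.W) (hm' : m' ∈ D.WM (D.deltaSimples PiM))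
      (hm'' : (D.w0 * w0dM) * m' * (D.w0 * w0dM)⁻¹ ∈ D.WM PiM),
      aσ (D.tM (D.deltaSimples PiM) m' hm') = σ' (D.tM PiM _ hm''))
    {X : Type} [AddCommGroup X] [Module ℂ X] (π : D.H →ₐ[ℂ] Module.End ℂ X)
    (f : X →ₗ[ℂ] U')
    (hf : ∀ (h : D.H) (hh : h ∈ D.HM PiM) (x : X), f (π h x) = σ' ⟨h, hh⟩ (f x))
    (z : D.W) (x : X) (j : D.JM (D.deltaSimples PiM)) :
    (πI' (D.t z) (fun j' => f (π (D.t ((D.w0 * w0dM) * j'.1⁻¹)) x))) j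
      = f (π (D.t ((D.w0 * w0dM) * j.1⁻¹ * z)) x) := by
  set y : D.JM (D.deltaSimples PiM) → U' :=
    fun j' => f (π (D.t ((D.w0 * w0dM) * j'.1⁻¹)) x) with hy
  set xs : D.JM (D.deltaSimples PiM) := ⟨cdD.c (z⁻¹ * j.1), cdD.c_min _⟩ with hxs
  rw [D.apply_decomp PiM _ y j]
  rw [Finset.sum_eq_single xs ?side ?notmem]
  case notmem => intro habs; exact absurd (Finset.mem_univ xs) habs
  case side =>
    intro x' _ hne
    rw [hπI'.1]
    apply Pi.single_eq_of_ne
    intro habs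
    apply hne
    have hceq : cdD.c (z * x'.1) = j.1 := (congrArg Subtype.val habs).symm
    exact Subtype.ext (D.cd_c_eq_iff cdD j.2 x'.2 hceq)
  · -- main term
    rw [hπI'.1 z xs (y xs)]
    obtain ⟨hc, hm⟩ := D.cd_c_of_min cdD z j.2
    have hidx : (⟨cdD.c (z * xs.1), cdD.c_min _⟩ : D.JM (D.deltaSimples PiM)) = j :=
      Subtype.ext hc
    rw [hidx, Pi.single_eq_same]
    set m' := cdD.m (z * xs.1) with hm'def
    have hm'mem : m' ∈ D.WM (D.deltaSimples PiM) := cdD.m_mem _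
    have hm''mem : (D.w0 * w0dM) * m' * (D.w0 * w0dM)⁻¹ ∈ D.WM PiM :=
      D.conj_WN_WM PiM w0dM hPiM' hw0dM' hm'mem
    rw [haσt m' hm'mem hm''mem]
    have hyxs : y xs = f (π (D.t ((D.w0 * w0dM) * xs.1⁻¹)) x) := rfl
    rw [hyxs]
    have happ := hf (D.t ((D.w0 * w0dM) * m' * (D.w0 * w0dM)⁻¹))
      (D.t_mem_HM PiM hm''mem) (π (D.t ((D.w0 * w0dM) * xs.1⁻¹)) x)
    have hstep : σ' (D.tM PiM ((D.w0 * w0dM) * m' * (D.w0 * w0dM)⁻¹) hm''mem)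
        (f ((π (D.t ((D.w0 * w0dM) * xs.1⁻¹))) x))
        = f ((π (D.t ((D.w0 * w0dM) * m' * (D.w0 * w0dM)⁻¹)))
            ((π (D.t ((D.w0 * w0dM) * xs.1⁻¹))) x)) := happ.symm
    rw [hstep]
    have hcomp : (π (D.t ((D.w0 * w0dM) * m' * (D.w0 * w0dM)⁻¹)))
        ((π (D.t ((D.w0 * w0dM) * xs.1⁻¹))) x)
        = (π (D.t (((D.w0 * w0dM) * m' * (D.w0 * w0dM)⁻¹) * ((D.w0 * w0dM) * xs.1⁻¹)))) x := by
      rw [← D.t_mul ((D.w0 * w0dM) * m' * (D.w0 * w0dM)⁻¹) ((D.w0 * w0dM) * xs.1⁻¹), map_mul]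
      rfl
    rw [hcomp]
    have hzxs : z * xs.1 = j.1 * m' := by
      rw [hm'def, ← hc]
      exact cdD.factor _
    have hgrp : ((D.w0 * w0dM) * m' * (D.w0 * w0dM)⁻¹) * ((D.w0 * w0dM) * xs.1⁻¹)
        = (D.w0 * w0dM) * j.1⁻¹ * z := by
      have hm'eq : m' = j.1⁻¹ * (z * xs.1) := by rw [hzxs]; group
      rw [hm'eq]
      group
    rw [hgrp]

end Main

end GHA

open GHA in
/-- second form of Frobenius reciprocity:
Hom_{H_M}(X|_{H_M}, U′) ≅ Hom_H(X, X(δ(M), aσ′)). -/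
theorem stmt_8 (D : GHA) (hk : D.KSymm) (PiM : Finset D.V)
    (hPiM : PiM ⊆ D.simples)
    (w0dM : D.W) (hw0dM : D.IsLongest (D.deltaSimples PiM) w0dM)
    (cdD : GHA.CosetData D (D.deltaSimples PiM))
    {X : Type} [AddCommGroup X] [Module ℂ X] [FiniteDimensional ℂ X]
    (π : D.H →ₐ[ℂ] Module.End ℂ X)
    {U' : Type} [AddCommGroup U'] [Module ℂ U'] [FiniteDimensional ℂ U']
    (σ' : D.HM PiM →ₐ[ℂ] Module.End ℂ U')
    (aσ : D.HM (D.deltaSimples PiM) →ₐ[ℂ] Module.End ℂ U')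
    (haσt : ∀ (m' : D.W) (hm' : m' ∈ D.WM (D.deltaSimples PiM))
      (hm'' : (D.w0 * w0dM) * m' * (D.w0 * w0dM)⁻¹ ∈ D.WM PiM),
      aσ (D.tM (D.deltaSimples PiM) m' hm') = σ' (D.tM PiM _ hm''))
    (haσθ : ∀ ω : D.VC,
      aσ (D.θM (D.deltaSimples PiM) ω) =
        σ' (D.θM PiM (D.actVC (D.w0 * w0dM) ω)))
    (πI' : D.H →ₐ[ℂ] Module.End ℂ (D.JM (D.deltaSimples PiM) → U'))
    (hπI' : GHA.IsInducedAction D (D.deltaSimples PiM) cdD aσ πI') :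
    Nonempty ((HomHM D PiM π σ') ≃ₗ[ℂ] (HomH D π πI')) := by
  classical
  set x0e := D.x0el PiM hPiM w0dM hw0dM with hx0e
  -- the candidate inverse map on plain linear maps
  set PsiL : (X →ₗ[ℂ] U') → (X →ₗ[ℂ] (D.JM (D.deltaSimples PiM) → U')) :=
    fun f => LinearMap.pi (fun j => f.comp (π (D.t ((D.w0 * w0dM) * j.1⁻¹)) : X →ₗ[ℂ] X))
    with hPsiL
  -- basic evaluation at x0e
  have hx0eval : ∀ (f : X →ₗ[ℂ] U') (x : X), ((PsiL f) x) x0e = f x := by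
    intro f x
    show f ((π (D.t ((D.w0 * w0dM) * (D.w0 * w0dM)⁻¹))) x) = f x
    rw [mul_inv_cancel, D.t_one, map_one]
    rfl
  -- Psi lands in HomH
  have hPsiMem : ∀ (f : X →ₗ[ℂ] U'),
      (∀ (h : D.H) (hh : h ∈ D.HM PiM) (x : X), f (π h x) = σ' ⟨h, hh⟩ (f x)) →
      (PsiL f) ∈ HomH D π πI' := by
    intro f hf
    have htequiv : ∀ (z : D.W) (x : X),
        (PsiL f) (π (D.t z) x) = πI' (D.t z) ((PsiL f) x) := by
      intro z x
      funext j
      have hT := D.Psi_t_equiv PiM w0dM cdD σ' aσ πI' hPiM hw0dM hπI' haσt π f hf z x j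
      have hcompose : (π (D.t ((D.w0 * w0dM) * j.1⁻¹))) ((π (D.t z)) x)
          = (π (D.t ((D.w0 * w0dM) * j.1⁻¹ * z))) x := by
        rw [← D.t_mul ((D.w0 * w0dM) * j.1⁻¹) z, map_mul]
        rfl
      calc ((PsiL f) (π (D.t z) x)) j
          = f ((π (D.t ((D.w0 * w0dM) * j.1⁻¹))) ((π (D.t z)) x)) := rfl
        _ = f ((π (D.t ((D.w0 * w0dM) * j.1⁻¹ * z))) x) := by rw [hcompose]
        _ = (πI' (D.t z) ((PsiL f) x)) j := hT.symm
    have hCHM : ∀ (a : D.H) (ha : a ∈ D.HM PiM) (x : X),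
        f (π a x) = (πI' a ((PsiL f) x)) x0e := by
      intro a ha x
      have hE := D.E1 PiM hPiM w0dM hw0dM cdD σ' aσ πI' hπI' haσt haσθ ha ((PsiL f) x)
      rw [hE, hx0eval f x, ← hf a ha x]
    have hC : ∀ (h : D.H), ∀ x : X, f (π h x) = (πI' h ((PsiL f) x)) x0e := by
      intro h
      have hmem : h ∈ D.TT PiM := by rw [D.TT_eq_top PiM]; exact Submodule.mem_top
      induction hmem using Submodule.span_induction with
      | mem u hu =>
        obtain ⟨a, ha, z, rfl⟩ := hu
        intro x
        rw [map_mul π, Module.End.mul_apply]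
        rw [hCHM a ha ((π (D.t z)) x)]
        rw [htequiv z x]
        rw [map_mul πI']
        rfl
      | zero =>
        intro x
        simp
      | add u v hu hv hPu hPv =>
        intro x
        simp only [map_add, LinearMap.add_apply, Pi.add_apply, map_add f]
        rw [hPu x, hPv x]
      | smul r u hu hPu =>
        intro x
        simp only [map_smul, LinearMap.smul_apply, Pi.smul_apply, map_smul f]
        rw [hPu x]
    intro h x
    funext j
    show f ((π (D.t ((D.w0 * w0dM) * j.1⁻¹))) ((π h) x)) = (πI' h ((PsiL f) x)) j
    have h1 : (π (D.t ((D.w0 * w0dM) * j.1⁻¹))) ((π h) x)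
        = (π (D.t ((D.w0 * w0dM) * j.1⁻¹) * h)) x := by
      rw [map_mul]
      rfl
    rw [h1, hC (D.t ((D.w0 * w0dM) * j.1⁻¹) * h) x]
    rw [map_mul πI', Module.End.mul_apply]
    exact D.piI_t_back PiM hPiM w0dM hw0dM cdD aσ πI' hπI' j (πI' h ((PsiL f) x))
  -- Phi lands in HomHM
  have hPhiMem : ∀ (F : X →ₗ[ℂ] (D.JM (D.deltaSimples PiM) → U')),
      (∀ (h : D.H) (x : X), F (π h x) = πI' h (F x)) →
      ((LinearMap.proj x0e).comp F) ∈ HomHM D PiM π σ' := by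
    intro F hF h hh x
    show (F ((π h) x)) x0e = σ' ⟨h, hh⟩ ((F x) x0e)
    rw [hF h x]
    exact D.E1 PiM hPiM w0dM hw0dM cdD σ' aσ πI' hπI' haσt haσθ hh (F x)
  -- the two linear maps
  refine ⟨LinearEquiv.ofLinear
    ({ toFun := fun f => ⟨PsiL f.1, hPsiMem f.1 f.2⟩
       map_add' := by
         intro f g
         apply Subtype.ext
         apply LinearMap.ext
         intro x
         funext j
         rfl
       map_smul' := by
         intro cc f
         apply Subtype.ext
         apply LinearMap.ext
         intro x
         funext j
         rfl } : (HomHM D PiM π σ') →ₗ[ℂ] (HomH D π πI'))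
    ({ toFun := fun F => ⟨(LinearMap.proj x0e).comp F.1, hPhiMem F.1 F.2⟩
       map_add' := by
         intro F G
         apply Subtype.ext
         apply LinearMap.ext
         intro x
         rfl
       map_smul' := by
         intro cc F
         apply Subtype.ext
         apply LinearMap.ext
         intro x
         rfl } : (HomH D π πI') →ₗ[ℂ] (HomHM D PiM π σ'))
    ?_ ?_⟩
  · -- Psi ∘ Phi = id on HomH
    apply LinearMap.ext
    intro F
    apply Subtype.ext
    apply LinearMap.ext
    intro x
    funext j
    show (F.1 ((π (D.t ((D.w0 * w0dM) * j.1⁻¹))) x)) x0e = (F.1 x) j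
    rw [F.2 (D.t ((D.w0 * w0dM) * j.1⁻¹)) x]
    exact D.piI_t_back PiM hPiM w0dM hw0dM cdD aσ πI' hπI' j (F.1 x)
  · -- Phi ∘ Psi = id on HomHM
    apply LinearMap.ext
    intro f
    apply Subtype.ext
    apply LinearMap.ext
    intro x
    exact hx0eval f.1 x
end
end

section
/- Assume k_{-w₀(α)}=k_α for all α∈Π. Let (π,X) be a finite-dimensional H-module, D:X→X an invertible ℂ-linear map with D∘π(h)=π(δ(h))∘D for all h∈H, and ⟨·,·⟩_• a •-invariant sesquilinear form on X. Then the sesquilinear form ⟨x,y⟩_★ := ⟨x, π(t_{w₀})(Dy)⟩_• is ★-invariant: ⟨π(h)x,y⟩_★=⟨x,π(h^★)y⟩_★ for all h∈H and x,y∈X. -/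
/- Formalization of the setting of Barbasch–Ciubotaru, "Hermitian forms for
affine Hecke algebras": a reduced root system, Weyl group, parameters,
complexifications, and the graded affine Hecke algebra. -/

noncomputable section

namespace GHAProofAux

open GHA

variable (D : GHA)

lemma pairC_zero_left (y : D.VdC) : D.pairC 0 y = 0 := by
  have h := D.pairC_add_left 0 0 y
  simp only [add_zero] at h
  exact (left_eq_add.mp h)

lemma iV_pair_inj (a b : D.V) (h : D.iV a + Complex.I • D.iV b = 0) : a = 0 ∧ b = 0 := by
  have key : ∀ u : D.Vd, (D.pairR a u : ℂ) + Complex.I * (D.pairR b u : ℂ) = 0 := by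
    intro u
    have h0 : D.pairC (D.iV a + Complex.I • D.iV b) (D.iVd u) = 0 := by
      rw [h]; exact pairC_zero_left D _
    rwa [D.pairC_add_left, D.pairC_smul_left, D.pairC_compat, D.pairC_compat] at h0
  constructor
  · apply D.pair_nondeg_left
    intro u
    have := congrArg Complex.re (key u)
    simpa using this
  · apply D.pair_nondeg_left
    intro u
    have := congrArg Complex.im (key u)
    simpa using this

lemma reV_imV_actVC (w : D.W) (x : D.VC) :
    D.reV (D.actVC w x) = D.actV w (D.reV x) ∧ D.imV (D.actVC w x) = D.actV w (D.imV x) := by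
  have h2 := D.vc_decomp (D.actVC w x)
  have h3 : D.actVC w x = D.iV (D.actV w (D.reV x)) + Complex.I • D.iV (D.actV w (D.imV x)) := by
    conv_lhs => rw [D.vc_decomp x]
    rw [map_add, map_smul, D.actVC_iV, D.actVC_iV]
  have hdiff : D.iV (D.reV (D.actVC w x) - D.actV w (D.reV x)) +
      Complex.I • D.iV (D.imV (D.actVC w x) - D.actV w (D.imV x)) = 0 := by
    rw [map_sub, map_sub, smul_sub]
    have h4 : D.iV (D.reV (D.actVC w x)) + Complex.I • D.iV (D.imV (D.actVC w x)) =
        D.iV (D.actV w (D.reV x)) + Complex.I • D.iV (D.actV w (D.imV x)) := h2.symm.trans h3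
    rw [← sub_eq_zero] at h4
    rw [← h4]; abel
  obtain ⟨hr, hi⟩ := iV_pair_inj D _ _ hdiff
  exact ⟨sub_eq_zero.mp hr, sub_eq_zero.mp hi⟩

lemma conjVC_actVC (w : D.W) (x : D.VC) :
    D.conjVC (D.actVC w x) = D.actVC w (D.conjVC x) := by
  obtain ⟨hr, hi⟩ := reV_imV_actVC D w x
  unfold GHA.conjVC
  rw [hr, hi, ← D.actVC_iV, ← D.actVC_iV, ← map_smul, ← map_sub]

lemma actV_inv_actV (w : D.W) (v : D.V) : D.actV w⁻¹ (D.actV w v) = v := by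
  have : D.actV w⁻¹ (D.actV w v) = D.actV (w⁻¹ * w) v := by
    rw [map_mul]; rfl
  rw [this, inv_mul_cancel, map_one]; rfl

lemma w0_inv : D.w0⁻¹ = D.w0 := by
  apply D.w0_unique
  intro α hα
  have himg : D.posRoots.image (fun β => -(D.actV D.w0 β)) = D.posRoots := by
    apply Finset.eq_of_subset_of_card_le
    · intro x hx
      simp only [Finset.mem_image] at hx
      obtain ⟨β, hβ, rfl⟩ := hx
      exact D.w0_neg β hβ
    · rw [Finset.card_image_of_injective]
      intro a b hab
      exact (D.actV D.w0).injective (neg_inj.mp hab)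
  rw [← himg] at hα
  simp only [Finset.mem_image] at hα
  obtain ⟨β, hβ, rfl⟩ := hα
  have : D.actV D.w0⁻¹ (-(D.actV D.w0 β)) = -β := by
    rw [map_neg, actV_inv_actV]
  rw [this, neg_neg]
  exact hβ

lemma w0_sq : D.w0 * D.w0 = 1 := by
  nth_rewrite 1 [← w0_inv D]
  exact inv_mul_cancel D.w0

lemma t_w0_sq : D.t D.w0 * D.t D.w0 = 1 := by
  rw [D.t_mul, w0_sq, D.t_one]

lemma actVC_w0_w0 (x : D.VC) : D.actVC D.w0 (D.actVC D.w0 x) = x := by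
  have : D.actVC D.w0 (D.actVC D.w0 x) = D.actVC (D.w0 * D.w0) x := by
    rw [map_mul]; rfl
  rw [this, w0_sq, map_one]; rfl

/-- The key algebraic identity: bul h · t_{w₀} = t_{w₀} · del (st h). -/
lemma key_identity (bul st del : D.H → D.H)
    (hb : D.IsBullet bul) (hs : D.IsStar st) (hd : D.IsDelta del) (h : D.H) :
    bul h * D.t D.w0 = D.t D.w0 * del (st h) := by
  set P : D.H → Prop := fun h => bul h * D.t D.w0 = D.t D.w0 * del (st h) with hP
  have Padd : ∀ a b, P a → P b → P (a + b) := by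
    intro a b ha hb'
    simp only [hP] at *
    rw [hb.map_add, hs.map_add, hd.map_add, add_mul, mul_add, ha, hb']
  have Pmul : ∀ a b, P a → P b → P (a * b) := by
    intro a b ha hb'
    simp only [hP] at *
    rw [hb.map_mul, hs.map_mul, hd.map_mul, mul_assoc, ha, ← mul_assoc, hb', mul_assoc]
  have Psmul : ∀ (c : ℂ) a, P a → P (c • a) := by
    intro c a ha
    simp only [hP] at *
    rw [hb.map_smul, hs.map_smul, hd.map_smul, smul_mul_assoc, mul_smul_comm, ha]
  have Pone : P 1 := by
    simp only [hP]
    rw [hb.map_one, hs.map_one, hd.map_one, one_mul, mul_one]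
  have Palg : ∀ c : ℂ, P (algebraMap ℂ D.H c) := by
    intro c
    have : algebraMap ℂ D.H c = c • (1 : D.H) := (Algebra.algebraMap_eq_smul_one c)
    rw [this]
    exact Psmul c 1 Pone
  have Pt : ∀ w : D.W, P (D.t w) := by
    intro w
    simp only [hP]
    rw [hb.map_t, hs.map_t, hd.map_t, D.t_mul, D.t_mul]
    congr 1
    rw [← mul_assoc, ← mul_assoc, w0_sq, one_mul]
  have Ptheta : ∀ x : D.VC, P (D.θ x) := by
    intro x
    simp only [hP]
    rw [hb.map_theta, hs.map_theta]
    have hneg : ∀ a : D.H, del (-a) = -del a := by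
      intro a
      rw [← neg_one_smul ℂ a, hd.map_smul, neg_one_smul]
    rw [hneg]
    rw [hd.map_mul, hd.map_mul, hd.map_t, hd.map_theta]
    rw [conjVC_actVC, actVC_w0_w0]
    have hw3 : D.w0 * D.w0 * D.w0 = D.w0 := by rw [w0_sq, one_mul]
    rw [hw3]
    simp only [mul_neg, neg_mul, neg_neg, ← mul_assoc, t_w0_sq D, one_mul]
  have Pzero : P 0 := by
    have := Psmul 0 1 Pone
    rwa [zero_smul] at this
  -- every element of the polynomial subalgebra satisfies P
  have Ppoly : ∀ p : D.H, p ∈ Algebra.adjoin ℂ (Set.range D.θ) → P p := by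
    intro p hp
    induction hp using Algebra.adjoin_induction with
    | mem x hx => obtain ⟨ω, rfl⟩ := hx; exact Ptheta ω
    | algebraMap c => exact Palg c
    | add a b _ _ ha hb' => exact Padd a b ha hb'
    | mul a b _ _ ha hb' => exact Pmul a b ha hb'
  obtain ⟨c, hc⟩ := D.pbw_span h
  rw [hc]
  refine Finset.sum_induction _ P Padd Pzero ?_
  intro w _
  exact Pmul _ _ (Pt w) (Ppoly _ (c w).2)

end GHAProofAux

open GHA in
/-- a •-invariant sesquilinear form twisted by t_{w₀} and an
intertwiner for δ is ★-invariant. -/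
theorem stmt_11 (D : GHA) (hk : D.KSymm) (bul st del : D.H → D.H)
    (hb : D.IsBullet bul) (hs : D.IsStar st) (hd : D.IsDelta del)
    {X : Type} [AddCommGroup X] [Module ℂ X] [FiniteDimensional ℂ X]
    (π : D.H →ₐ[ℂ] Module.End ℂ X)
    (Dmap : X →ₗ[ℂ] X) (hDbij : Function.Bijective Dmap)
    (hDdel : ∀ (h : D.H) (x : X), Dmap (π h x) = π (del h) (Dmap x))
    (B : X → X → ℂ) (hsesq : SesqForm B) (hinv : D.InvForm π bul B) :
    ∀ (h : D.H) (x y : X),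
      B (π h x) (π (D.t D.w0) (Dmap y)) =
      B x (π (D.t D.w0) (Dmap (π (st h) y))) := by
  intro h x y
  rw [hinv h x _]
  have h1 : π (bul h) (π (D.t D.w0) (Dmap y)) = π (bul h * D.t D.w0) (Dmap y) := by
    rw [map_mul]; rfl
  rw [h1, GHAProofAux.key_identity D bul st del hb hs hd h, map_mul]
  have h2 : (π (D.t D.w0) * π (del (st h))) (Dmap y) =
      π (D.t D.w0) (π (del (st h)) (Dmap y)) := rfl
  rw [h2, ← hDdel]
end
end
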